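/- arXiv:1902.06941 — 12 statements merged into one kernel-verified Lean document; each statement's English description precedes it below -/
import Mathlib

section
/- Let X be a real-valued random variable with continuous distribution function, α ∈ (0,1), and U : ℝ → ℝ increasing and continuous such that Assumption (A) holds. Then the events {X ≥ VaR_α(X)} and {U(X) ≥ VaR_α(U(X))} are equal. -/
open MeasureTheory Real Set

/-- Value at Risk at level `α`: `VaR_α(X) = inf {x | F_X(x) ≥ α}`. -/
noncomputable def VaR {Ω : Type*} [MeasurableSpace Ω] (P : Measure Ω) (X : Ω → ℝ) (α : ℝ) : ℝ :=
  sInf {x : ℝ | α ≤ (P {ω | X ω ≤ x}).toReal}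

/-- The cumulative distribution function of `X` under `P`. -/
noncomputable def cdfR {Ω : Type*} [MeasurableSpace Ω] (P : Measure Ω) (X : Ω → ℝ) (x : ℝ) : ℝ :=
  (P {ω | X ω ≤ x}).toReal

/-- Conditional expectation of `f` given the event `A`: `E[f | A]`. -/
noncomputable def condExpOn {Ω : Type*} [MeasurableSpace Ω] (P : Measure Ω) (f : Ω → ℝ)
    (A : Set Ω) : ℝ :=
  (∫ ω in A, f ω ∂P) / (P A).toReal

/-- The tail event `{X ≥ VaR_α(X)}`. -/
def tailEvent {Ω : Type*} [MeasurableSpace Ω] (P : Measure Ω) (X : Ω → ℝ) (α : ℝ) : Set Ω :=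
  {ω | VaR P X α ≤ X ω}

/-- Generalized inverse `U⁻¹(y) = inf {x | U(x) ≥ y}`. -/
noncomputable def ginv (U : ℝ → ℝ) (y : ℝ) : ℝ := sInf {x : ℝ | y ≤ U x}

/-- Tail Quasi-Linear Mean `ρ_U^α(X) = U⁻¹(E[U(X) | X ≥ VaR_α(X)])`. -/
noncomputable def TQLM {Ω : Type*} [MeasurableSpace Ω] (P : Measure Ω) (X : Ω → ℝ) (α : ℝ)
    (U : ℝ → ℝ) : ℝ :=
  ginv U (condExpOn P (fun ω => U (X ω)) (tailEvent P X α))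

/-- Conditional Tail Expectation `CTE_α(X) = E[X | X ≥ VaR_α(X)]`. -/
noncomputable def CTE {Ω : Type*} [MeasurableSpace Ω] (P : Measure Ω) (X : Ω → ℝ) (α : ℝ) : ℝ :=
  condExpOn P X (tailEvent P X α)

/-- Tail Conditional Entropic Risk Measure `ρ_γ^α(X) = (1/γ) log E[e^{γX} | X ≥ VaR_α(X)]`. -/
noncomputable def TCERM {Ω : Type*} [MeasurableSpace Ω] (P : Measure Ω) (X : Ω → ℝ) (α : ℝ)
    (γ : ℝ) : ℝ :=
  (1 / γ) * Real.log (condExpOn P (fun ω => Real.exp (γ * X ω)) (tailEvent P X α))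


section VaRaux
open Filter Topology
variable {Ω : Type*} [MeasurableSpace Ω] (P : MeasureTheory.Measure Ω)
  [MeasureTheory.IsProbabilityMeasure P] (X : Ω → ℝ)

lemma cdfR_eq_cdf (hX : Measurable X) (x : ℝ) :
    cdfR P X x = ProbabilityTheory.cdf (P.map X) x := by
  have : MeasureTheory.IsProbabilityMeasure (P.map X) :=
    MeasureTheory.Measure.isProbabilityMeasure_map hX.aemeasurable
  rw [ProbabilityTheory.cdf_eq_real, Measure.real, MeasureTheory.Measure.map_apply hX measurableSet_Iic]
  rfl

lemma cdfR_mono : Monotone (cdfR P X) := fun _ _ hab =>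
  ENNReal.toReal_mono (MeasureTheory.measure_ne_top P _)
    (MeasureTheory.measure_mono fun _ h => le_trans h hab)

lemma cdfR_tendsto_atTop (hX : Measurable X) : Tendsto (cdfR P X) atTop (𝓝 1) := by
  have : MeasureTheory.IsProbabilityMeasure (P.map X) :=
    MeasureTheory.Measure.isProbabilityMeasure_map hX.aemeasurable
  exact (ProbabilityTheory.tendsto_cdf_atTop (P.map X)).congr
    fun x => (cdfR_eq_cdf P X hX x).symm

lemma cdfR_tendsto_atBot (hX : Measurable X) : Tendsto (cdfR P X) atBot (𝓝 0) := by
  have : MeasureTheory.IsProbabilityMeasure (P.map X) :=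
    MeasureTheory.Measure.isProbabilityMeasure_map hX.aemeasurable
  exact (ProbabilityTheory.tendsto_cdf_atBot (P.map X)).congr
    fun x => (cdfR_eq_cdf P X hX x).symm

end VaRaux

open Filter Topology in
/-- Under Assumption (A), the events `{X ≥ VaR_α(X)}` and
`{U(X) ≥ VaR_α(U(X))}` coincide. -/
theorem tailEvent_eq_tailEvent_comp
    {Ω : Type*} [MeasurableSpace Ω] (P : Measure Ω) [IsProbabilityMeasure P]
    (X : Ω → ℝ) (hX : Measurable X) (hFX : Continuous (cdfR P X))
    (α : ℝ) (hα : α ∈ Set.Ioo (0:ℝ) 1)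
    (U : ℝ → ℝ) (hU : Monotone U) (hUc : Continuous U)
    (hA : ∃ ε > 0, StrictMonoOn U (Set.Ioo (VaR P X α - ε) (VaR P X α))) :
    {ω | VaR P X α ≤ X ω} = {ω | VaR P (fun ω => U (X ω)) α ≤ U (X ω)} := by
  obtain ⟨ε, hε, hSM⟩ := hA
  set m := VaR P X α with hm
  have hSdef : {x : ℝ | α ≤ (P {ω | X ω ≤ x}).toReal} = {x : ℝ | α ≤ cdfR P X x} := rfl
  have hSne : {x : ℝ | α ≤ cdfR P X x}.Nonempty := by
    obtain ⟨x, hx⟩ :=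
      ((cdfR_tendsto_atTop P X hX).eventually (eventually_ge_nhds hα.2)).exists
    exact ⟨x, hx⟩
  have hSbdd : BddBelow {x : ℝ | α ≤ cdfR P X x} := by
    obtain ⟨x0, hx0⟩ :=
      ((cdfR_tendsto_atBot P X hX).eventually (eventually_lt_nhds hα.1)).exists
    refine ⟨x0, fun x hx => ?_⟩
    by_contra h
    push_neg at h
    exact absurd (le_trans hx (cdfR_mono P X h.le)) (not_le.2 hx0)
  have hmemS : α ≤ cdfR P X m := by
    have hclosed : IsClosed {x : ℝ | α ≤ cdfR P X x} := isClosed_le continuous_const hFX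
    have : m ∈ {x : ℝ | α ≤ cdfR P X x} := by
      rw [hm]; unfold VaR; rw [hSdef]
      exact hclosed.csInf_mem hSne hSbdd
    exact this
  have hlt : ∀ t, t < m → cdfR P X t < α := by
    intro t ht
    by_contra h
    push_neg at h
    have : m ≤ t := by
      rw [hm]; unfold VaR; rw [hSdef]; exact csInf_le hSbdd h
    exact absurd this (not_le.2 ht)
  set G := cdfR P (fun ω => U (X ω)) with hGdef
  have hGUm : α ≤ G (U m) :=
    le_trans hmemS (ENNReal.toReal_mono (measure_ne_top P _)
      (measure_mono fun ω h => hU h))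
  have hGlb : ∀ y ∈ {y : ℝ | α ≤ G y}, U m ≤ y := by
    intro y hy
    by_contra h
    push_neg at h
    have hUt : ∀ᶠ t in 𝓝[<] m, y < U t :=
      ((hUc.tendsto m).mono_left nhdsWithin_le_nhds).eventually (eventually_gt_nhds h)
    obtain ⟨t, hyt, htm⟩ := (hUt.and self_mem_nhdsWithin).exists
    have hsub : G y ≤ cdfR P X t := by
      refine ENNReal.toReal_mono (measure_ne_top P _) (measure_mono ?_)
      intro ω hω
      simp only [mem_setOf_eq] at hω ⊢
      by_contra hc
      push_neg at hc
      exact absurd (le_trans (hU hc.le) hω) (not_le.2 hyt)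
    exact absurd ((hy.trans hsub).trans_lt (hlt t htm)) (lt_irrefl α)
  have hVarU : VaR P (fun ω => U (X ω)) α = U m := by
    unfold VaR
    exact IsLeast.csInf_eq ⟨hGUm, hGlb⟩
  ext ω
  simp only [mem_setOf_eq, hVarU]
  constructor
  · exact fun h => hU h
  · intro h
    by_contra hc
    push_neg at hc
    set a := max (X ω) (m - ε) with ha
    have ham : a < m := max_lt hc (by linarith)
    set t1 := a + (m - a) / 3 with ht1
    set t2 := a + 2 * (m - a) / 3 with ht2
    have h1 : a < t1 := by rw [ht1]; linarith
    have h12 : t1 < t2 := by rw [ht1, ht2]; linarith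
    have h2m : t2 < m := by rw [ht2]; linarith
    have ht1mem : t1 ∈ Set.Ioo (m - ε) m := ⟨lt_of_le_of_lt (le_max_right _ _) h1, h12.trans h2m⟩
    have ht2mem : t2 ∈ Set.Ioo (m - ε) m := ⟨(le_max_right _ _).trans_lt (h1.trans h12), h2m⟩
    have : U (X ω) < U m :=
      lt_of_le_of_lt (hU ((le_max_left _ _).trans h1.le))
        (lt_of_lt_of_le (hSM ht1mem ht2mem h12) (hU h2m.le))
    exact absurd h (not_le.2 this)
end

section
/- Let X be an integrable real-valued random variable with continuous distribution function, α ∈ (0,1), and U : ℝ → ℝ increasing and continuous with U(X) integrable, such that Assumption (A) holds. Then ρ_U^α(X) = U^{-1}(CTE_α(U(X))), where CTE_α(U(X)) = E[U(X) | U(X) ≥ VaR_α(U(X))]. -/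
open MeasureTheory Real Set
open Filter Topology

/-- Under Assumption (A), `ρ_U^α(X) = U⁻¹(CTE_α(U(X)))`. -/
theorem TQLM_eq_ginv_CTE
    {Ω : Type*} [MeasurableSpace Ω] (P : Measure Ω) [IsProbabilityMeasure P]
    (X : Ω → ℝ) (hX : Measurable X) (hXint : Integrable X P)
    (hFX : Continuous (cdfR P X))
    (α : ℝ) (hα : α ∈ Set.Ioo (0:ℝ) 1)
    (U : ℝ → ℝ) (hU : Monotone U) (hUc : Continuous U)
    (hUXint : Integrable (fun ω => U (X ω)) P)
    (hA : ∃ ε > 0, StrictMonoOn U (Set.Ioo (VaR P X α - ε) (VaR P X α))) :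
    TQLM P X α U = ginv U (CTE P (fun ω => U (X ω)) α) := by
  obtain ⟨hα0, hα1⟩ := hα
  set v := VaR P X α with hv
  set S : Set ℝ := {x : ℝ | α ≤ cdfR P X x} with hSdef
  have hmono : Monotone (cdfR P X) := fun a b hab =>
    ENNReal.toReal_mono (measure_ne_top P _) (measure_mono fun ω h => le_trans h hab)
  -- S is nonempty
  have hne : S.Nonempty := by
    have hmonos : Monotone (fun n : ℕ => {ω | X ω ≤ (n : ℝ)}) := by
      intro a b hab ω h
      simp only [mem_setOf_eq] at h ⊢
      exact le_trans h (by exact_mod_cast hab)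
    have hU1 : (⋃ n : ℕ, {ω | X ω ≤ (n : ℝ)}) = univ := by
      ext ω
      simp only [mem_iUnion, mem_univ, iff_true, mem_setOf_eq]
      exact exists_nat_ge (X ω)
    have h1 := tendsto_measure_iUnion_atTop (μ := P) hmonos
    rw [hU1, measure_univ] at h1
    have h2 : ∀ᶠ n : ℕ in atTop, ENNReal.ofReal α < P {ω | X ω ≤ (n : ℝ)} :=
      h1.eventually_const_lt (by simpa [ENNReal.ofReal_lt_one] using hα1)
    obtain ⟨n, hn⟩ := h2.exists
    exact ⟨(n : ℝ), le_of_lt ((ENNReal.ofReal_lt_iff_lt_toReal hα0.le (measure_ne_top P _)).1 hn)⟩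
  -- S is bounded below
  have hbdd : BddBelow S := by
    have hanti : Antitone (fun n : ℕ => {ω | X ω ≤ -(n : ℝ)}) := by
      intro a b hab ω h
      simp only [mem_setOf_eq] at h ⊢
      refine le_trans h (neg_le_neg ?_)
      exact_mod_cast hab
    have hI : (⋂ n : ℕ, {ω | X ω ≤ -(n : ℝ)}) = (∅ : Set Ω) := by
      ext ω
      simp only [mem_iInter, mem_empty_iff_false, iff_false, mem_setOf_eq, not_forall, not_le]
      obtain ⟨n, hn⟩ := exists_nat_gt (-X ω)
      exact ⟨n, by linarith⟩
    have h1 := tendsto_measure_iInter_atTop (μ := P) (s := fun n : ℕ => {ω | X ω ≤ -(n : ℝ)})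
      (fun n => (hX measurableSet_Iic).nullMeasurableSet) hanti ⟨0, measure_ne_top P _⟩
    rw [hI, measure_empty] at h1
    have h2 : ∀ᶠ n : ℕ in atTop, P {ω | X ω ≤ -(n : ℝ)} < ENNReal.ofReal α :=
      h1.eventually_lt_const (by simpa [ENNReal.ofReal_pos] using hα0)
    obtain ⟨n, hn⟩ := h2.exists
    refine ⟨-(n : ℝ), fun x hx => ?_⟩
    by_contra hc
    push_neg at hc
    have : cdfR P X x ≤ cdfR P X (-(n : ℝ)) := hmono hc.le
    have hlt : cdfR P X (-(n : ℝ)) < α := ENNReal.toReal_lt_of_lt_ofReal hn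
    exact absurd hx (by simp only [hSdef, mem_setOf_eq]; push_neg; linarith)
  have hclosed : IsClosed S := isClosed_le continuous_const hFX
  have hvS : v ∈ S := hclosed.csInf_mem hne hbdd
  have hFv : α ≤ (P {ω | X ω ≤ v}).toReal := hvS
  -- pointwise key : U v ≤ U x ↔ v ≤ x
  have hkey : ∀ x : ℝ, U v ≤ U x ↔ v ≤ x := by
    obtain ⟨ε, hε, hsm⟩ := hA
    intro x
    constructor
    · intro h
      by_contra hc
      push_neg at hc
      set t₁ := max x (v - ε / 2) with ht₁
      have ht₁v : t₁ < v := max_lt hc (by linarith)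
      have ht₁ε : v - ε < t₁ := lt_of_lt_of_le (by linarith) (le_max_right _ _)
      set t₂ := (t₁ + v) / 2 with ht₂
      have h12 : t₁ < t₂ := by simp only [ht₂]; linarith
      have h2v : t₂ < v := by simp only [ht₂]; linarith
      have : U x < U v :=
        calc U x ≤ U t₁ := hU (le_max_left _ _)
          _ < U t₂ := hsm ⟨ht₁ε, ht₁v⟩ ⟨by linarith, h2v⟩ h12
          _ ≤ U v := hU h2v.le
      linarith
    · intro h
      exact hU h
  -- VaR of U ∘ X equals U v
  have hVaRU : VaR P (fun ω => U (X ω)) α = U v := by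
    set S' : Set ℝ := {y : ℝ | α ≤ (P {ω | U (X ω) ≤ y}).toReal} with hS'
    have hmem : U v ∈ S' := by
      refine le_trans hFv (ENNReal.toReal_mono (measure_ne_top P _)
        (measure_mono fun ω h => hU h))
    have hlb : ∀ y ∈ S', U v ≤ y := by
      intro y hy
      by_contra hc
      push_neg at hc
      have h1 : ∀ᶠ x in 𝓝 v, y < U x :=
        hUc.continuousAt.eventually (eventually_gt_nhds hc)
      have h2 : ∀ᶠ x in 𝓝[<] v, y < U x := h1.filter_mono nhdsWithin_le_nhds
      obtain ⟨x₀, hx₀y, hx₀v⟩ := (h2.and (eventually_mem_nhdsWithin (s := Iio v))).exists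
      have hx₀v : x₀ < v := hx₀v
      have hx₀S : x₀ ∉ S := fun hmem' => absurd (csInf_le hbdd hmem') (not_le.2 hx₀v)
      have hsub : {ω | U (X ω) ≤ y} ⊆ {ω | X ω ≤ x₀} := by
        intro ω h
        simp only [mem_setOf_eq] at h ⊢
        by_contra hcc
        push_neg at hcc
        have := hU hcc.le
        linarith
      have hle : (P {ω | U (X ω) ≤ y}).toReal ≤ cdfR P X x₀ :=
        ENNReal.toReal_mono (measure_ne_top P _) (measure_mono hsub)
      have : α ≤ cdfR P X x₀ := le_trans hy hle
      exact hx₀S this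
    show sInf S' = U v
    exact le_antisymm (csInf_le ⟨U v, hlb⟩ hmem) (le_csInf ⟨U v, hmem⟩ hlb)
  have hTE : tailEvent P (fun ω => U (X ω)) α = tailEvent P X α := by
    ext ω
    simp only [tailEvent, mem_setOf_eq, hVaRU]
    exact hkey (X ω)
  unfold TQLM CTE
  rw [hTE]
end

section
/- Let X be a real-valued random variable with continuous distribution function, α ∈ (0,1), and U : ℝ → ℝ increasing and continuous with U(X) integrable. Then ρ_U^α(X) ≥ ψ_U(X), i.e., the Tail Quasi-Linear Mean dominates the Quasi-Linear Mean. -/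
open MeasureTheory Real Set

/-- The Tail Quasi-Linear Mean dominates the Quasi-Linear Mean
`ψ_U(X) = U⁻¹(E[U(X)])`. -/
theorem QLM_le_TQLM
    {Ω : Type*} [MeasurableSpace Ω] (P : Measure Ω) [IsProbabilityMeasure P]
    (X : Ω → ℝ) (hX : Measurable X) (hFX : Continuous (cdfR P X))
    (α : ℝ) (hα : α ∈ Set.Ioo (0:ℝ) 1)
    (U : ℝ → ℝ) (hU : Monotone U) (hUc : Continuous U)
    (hUXint : Integrable (fun ω => U (X ω)) P) :
    ginv U (∫ ω, U (X ω) ∂P) ≤ TQLM P X α U := by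
  obtain ⟨hα0, hα1⟩ := hα
  set v : ℝ := VaR P X α with hv
  set A : Set Ω := tailEvent P X α with hA
  have hAdef : A = {ω | v ≤ X ω} := rfl
  have hAmeas : MeasurableSet A := measurableSet_le measurable_const hX
  -- the cdf is monotone
  have hFmono : Monotone (cdfR P X) := by
    intro x y hxy
    exact ENNReal.toReal_mono (measure_ne_top _ _)
      (measure_mono (fun ω h => le_trans h hxy))
  -- there is a point where the cdf is below α
  have hx0 : ∃ x₀, cdfR P X x₀ < α := by
    have hmap : IsProbabilityMeasure (P.map X) := Measure.isProbabilityMeasure_map hX.aemeasurable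
    have h1 : Filter.Tendsto (ProbabilityTheory.cdf (P.map X)) Filter.atBot (nhds 0) :=
      ProbabilityTheory.tendsto_cdf_atBot (P.map X)
    have heq : ∀ x, ProbabilityTheory.cdf (P.map X) x = cdfR P X x := by
      intro x
      rw [ProbabilityTheory.cdf_eq_real, measureReal_def]
      unfold cdfR
      rw [Measure.map_apply hX measurableSet_Iic]
      rfl
    have h2 : Filter.Tendsto (cdfR P X) Filter.atBot (nhds 0) := by
      simpa [funext heq] using h1
    obtain ⟨x₀, hx₀⟩ := (h2.eventually_lt_const hα0).exists
    exact ⟨x₀, hx₀⟩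
  obtain ⟨x₀, hx₀⟩ := hx0
  -- the defining set of VaR is bounded below
  have hbdd : BddBelow {x : ℝ | α ≤ cdfR P X x} := by
    refine ⟨x₀, fun x hx => ?_⟩
    by_contra h
    push_neg at h
    exact absurd (le_trans hx (hFmono h.le)) (not_le.mpr hx₀)
  -- strictly below v, the cdf is < α
  have hbelow : ∀ x < v, cdfR P X x < α := by
    intro x hxv
    by_contra h
    push_neg at h
    exact absurd (csInf_le hbdd h) (not_le.mpr hxv)
  -- F v ≤ α
  have hFv : cdfR P X v ≤ α := by
    have hne : (nhdsWithin v (Iio v)).NeBot := nhdsLT_neBot v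
    have htend : Filter.Tendsto (cdfR P X) (nhdsWithin v (Iio v)) (nhds (cdfR P X v)) :=
      (hFX.tendsto v).mono_left nhdsWithin_le_nhds
    refine le_of_tendsto htend ?_
    filter_upwards [self_mem_nhdsWithin] with x hx
    exact (hbelow x hx).le
  set p : ℝ := (P A).toReal with hp
  have hp1 : p ≤ 1 := by
    have := prob_le_one (μ := P) (s := A)
    simpa [hp] using ENNReal.toReal_mono (by simp) this
  -- P(A) ≥ 1 - α > 0
  have hp0 : 0 < p := by
    have hcover : A ∪ {ω | X ω ≤ v} = univ := by
      ext ω; simp [hAdef, le_total]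
    have h1 : (1 : ENNReal) ≤ P A + P {ω | X ω ≤ v} := by
      calc (1 : ENNReal) = P (A ∪ {ω | X ω ≤ v}) := by rw [hcover]; simp
        _ ≤ P A + P {ω | X ω ≤ v} := measure_union_le _ _
    have h2 : (1 : ℝ) ≤ p + cdfR P X v := by
      have := ENNReal.toReal_mono (by finiteness) h1
      rwa [ENNReal.toReal_one, ENNReal.toReal_add (measure_ne_top _ _) (measure_ne_top _ _)]
        at this
    linarith
  have hPA0 : P A ≠ 0 := by
    intro h
    rw [hp, h] at hp0
    simp at hp0
  set IA : ℝ := ∫ ω in A, U (X ω) ∂P with hIA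
  set IB : ℝ := ∫ ω in Aᶜ, U (X ω) ∂P with hIB
  have hsplit : IA + IB = ∫ ω, U (X ω) ∂P := integral_add_compl hAmeas hUXint
  -- U v * p ≤ IA
  have hlow : U v * p ≤ IA := by
    have h := setIntegral_mono_on (integrableOn_const (measure_ne_top P A))
      hUXint.integrableOn hAmeas (fun ω hω => hU (hω : v ≤ X ω))
    simpa [setIntegral_const, measureReal_def, smul_eq_mul, mul_comm] using h
  -- IB ≤ U v * (1 - p)
  have hcomp : (P Aᶜ).toReal = 1 - p := by
    rw [measure_compl hAmeas (measure_ne_top _ _), measure_univ,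
      ENNReal.toReal_sub_of_le prob_le_one ENNReal.one_ne_top]
    simp [hp]
  have hhigh : IB ≤ U v * (1 - p) := by
    have h := setIntegral_mono_on hUXint.integrableOn
      (integrableOn_const (measure_ne_top P Aᶜ))
      hAmeas.compl (fun ω hω => hU (le_of_lt (by simpa [hAdef] using hω : X ω < v)))
    simpa [setIntegral_const, measureReal_def, smul_eq_mul, hcomp, mul_comm] using h
  -- the key inequality: E[U X] ≤ E[U X | A]
  have hkey : (∫ ω, U (X ω) ∂P) ≤ IA / p := by
    rw [← hsplit, le_div_iff₀ hp0]
    nlinarith [hlow, hhigh, hp0, hp1]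
  have hcond : condExpOn P (fun ω => U (X ω)) A = IA / p := rfl
  -- abbreviations
  set y₁ : ℝ := ∫ ω, U (X ω) ∂P with hy₁
  set y₂ : ℝ := IA / p with hy₂
  -- the set for y₂ is nonempty
  have hS₂ne : {x : ℝ | y₂ ≤ U x}.Nonempty := by
    by_contra h
    rw [not_nonempty_iff_eq_empty, eq_empty_iff_forall_notMem] at h
    have hlt : ∀ x, U x < y₂ := fun x => lt_of_not_ge (h x)
    set g : Ω → ℝ := fun ω => y₂ - U (X ω) with hg
    have hgint : Integrable g (P.restrict A) :=
      (integrable_const y₂).sub hUXint |>.restrict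
    have hgnn : 0 ≤ᵐ[P.restrict A] g := by
      filter_upwards with ω
      exact sub_nonneg.2 (hlt (X ω)).le
    have hgzero : (∫ ω, g ω ∂(P.restrict A)) = 0 := by
      have : (∫ ω in A, g ω ∂P) = y₂ * p - IA := by
        rw [hg]
        rw [integral_sub (integrable_const y₂).restrict hUXint.integrableOn]
        simp [setIntegral_const, measureReal_def, smul_eq_mul, hIA, mul_comm, hp]
      rw [show (∫ ω, g ω ∂(P.restrict A)) = (∫ ω in A, g ω ∂P) from rfl, this, hy₂]
      field_simp
      simp
    have hae : g =ᵐ[P.restrict A] 0 :=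
      (integral_eq_zero_iff_of_nonneg_ae hgnn hgint).1 hgzero
    have : P.restrict A {ω | g ω ≠ 0} = 0 := by
      simpa [Filter.EventuallyEq, ae_iff] using hae
    have huniv : {ω | g ω ≠ 0} = univ := by
      ext ω
      simp [hg, sub_ne_zero, ne_of_gt (hlt (X ω))]
    rw [huniv, Measure.restrict_apply_univ] at this
    exact hPA0 this
  have hy12 : y₁ ≤ y₂ := hkey
  show ginv U y₁ ≤ ginv U y₂
  unfold ginv
  by_cases hb : BddBelow {x : ℝ | y₁ ≤ U x}
  · exact csInf_le_csInf hb hS₂ne (fun x hx => le_trans hy12 hx)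
  · -- the set {y₁ ≤ U x} is not bounded below: then y₁ ≤ U x everywhere,
    -- which forces U ∘ X = y₁ a.e., hence y₂ = y₁.
    have htot : ∀ z, y₁ ≤ U z := by
      intro z
      obtain ⟨x, hx, hxz⟩ := not_bddBelow_iff.1 hb z
      exact le_trans hx (hU hxz.le)
    have hnn : 0 ≤ᵐ[P] fun ω => U (X ω) - y₁ := by
      filter_upwards with ω
      exact sub_nonneg.2 (htot (X ω))
    have hzero : (∫ ω, (U (X ω) - y₁) ∂P) = 0 := by
      rw [integral_sub hUXint (integrable_const _)]
      simp [hy₁]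
    have hae : (fun ω => U (X ω) - y₁) =ᵐ[P] 0 :=
      (integral_eq_zero_iff_of_nonneg_ae hnn (hUXint.sub (integrable_const _))).1 hzero
    have haeconst : (fun ω => U (X ω)) =ᵐ[P] fun _ => y₁ := by
      filter_upwards [hae] with ω hω
      have : U (X ω) - y₁ = 0 := hω
      linarith
    have haeA : ∀ᵐ ω ∂P, ω ∈ A → U (X ω) = y₁ := by
      filter_upwards [haeconst] with ω hω _
      exact hω
    have hIAeq : IA = y₁ * p := by
      have heq : ∫ ω in A, U (X ω) ∂P = ∫ _ω in A, y₁ ∂P :=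
        setIntegral_congr_ae hAmeas haeA
      rw [hIA, heq, setIntegral_const, smul_eq_mul, mul_comm, measureReal_def]
    have : y₂ = y₁ := by
      rw [hy₂, hIAeq, mul_div_assoc, div_self (ne_of_gt hp0), mul_one]
    rw [this]
end

section
/- Let X be an integrable real-valued random variable with continuous distribution function, α ∈ (0,1), and U : ℝ → ℝ increasing, continuous and concave with U(X) integrable, such that Assumption (A) holds. Then VaR_α(X) ≤ ρ_U^α(X) ≤ CTE_α(X). -/
open MeasureTheory Real Set

/-- For concave increasing `U` satisfying Assumption (A),
`VaR_α(X) ≤ ρ_U^α(X) ≤ CTE_α(X)`. -/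
theorem VaR_le_TQLM_le_CTE
    {Ω : Type*} [MeasurableSpace Ω] (P : Measure Ω) [IsProbabilityMeasure P]
    (X : Ω → ℝ) (hX : Measurable X) (hXint : Integrable X P)
    (hFX : Continuous (cdfR P X))
    (α : ℝ) (hα : α ∈ Set.Ioo (0:ℝ) 1)
    (U : ℝ → ℝ) (hU : Monotone U) (hUc : Continuous U)
    (hUconc : ConcaveOn ℝ Set.univ U)
    (hUXint : Integrable (fun ω => U (X ω)) P)
    (hA : ∃ ε > 0, StrictMonoOn U (Set.Ioo (VaR P X α - ε) (VaR P X α))) :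
    VaR P X α ≤ TQLM P X α U ∧ TQLM P X α U ≤ CTE P X α := by
  obtain ⟨hα0, hα1⟩ := hα
  set v := VaR P X α with hvdef
  set A := tailEvent P X α with hAdef
  have hAmeas : MeasurableSet A := measurableSet_le measurable_const hX
  haveI : IsProbabilityMeasure (P.map X) := Measure.isProbabilityMeasure_map hX.aemeasurable
  have hcdf_eq : ∀ x, cdfR P X x = ProbabilityTheory.cdf (P.map X) x := by
    intro x
    rw [ProbabilityTheory.cdf_eq_real, Measure.real, Measure.map_apply hX measurableSet_Iic]
    rfl
  -- the set defining VaR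
  set S : Set ℝ := {x : ℝ | α ≤ cdfR P X x} with hSdef
  have hvS : v = sInf S := rfl
  have hSne : S.Nonempty := by
    have h1 : Filter.Tendsto (cdfR P X) Filter.atTop (nhds 1) := by
      simp only [funext hcdf_eq]
      exact ProbabilityTheory.tendsto_cdf_atTop _
    obtain ⟨x, hx⟩ := (h1.eventually (eventually_gt_nhds hα1)).exists
    exact ⟨x, hx.le⟩
  have hmono : Monotone (cdfR P X) := by
    simp only [funext hcdf_eq]
    exact ProbabilityTheory.monotone_cdf _
  have hSbdd : BddBelow S := by
    have h0 : Filter.Tendsto (cdfR P X) Filter.atBot (nhds 0) := by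
      simp only [funext hcdf_eq]
      exact ProbabilityTheory.tendsto_cdf_atBot _
    obtain ⟨x0, hx0⟩ := (h0.eventually (eventually_lt_nhds hα0)).exists
    refine ⟨x0, fun x hx => ?_⟩
    by_contra h
    push_neg at h
    exact absurd (hx.trans (hmono h.le)) (not_le.mpr hx0)
  -- F v ≤ α
  have hkey : ∀ x < v, cdfR P X x < α := by
    intro x hx
    by_contra h
    push_neg at h
    exact absurd (csInf_le hSbdd h) (not_le.mpr hx)
  have hFv : cdfR P X v ≤ α := by
    have ht : Filter.Tendsto (cdfR P X) (nhdsWithin v (Set.Iio v)) (nhds (cdfR P X v)) :=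
      (hFX.tendsto v).mono_left nhdsWithin_le_nhds
    exact le_of_tendsto ht (eventually_nhdsWithin_of_forall fun x hx => (hkey x hx).le)
  -- P A > 0
  have hPA_pos : 0 < P A := by
    have h1 : P {ω | X ω ≤ v} < 1 := by
      have h2 : (P {ω | X ω ≤ v}).toReal < 1 := lt_of_le_of_lt hFv hα1
      have := measure_ne_top P {ω | X ω ≤ v}
      rw [← ENNReal.toReal_lt_toReal this ENNReal.one_ne_top, ENNReal.toReal_one]
      exact h2
    have hcompl : Aᶜ ⊆ {ω | X ω ≤ v} := by
      intro ω hω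
      simp only [hAdef, tailEvent, Set.mem_compl_iff, Set.mem_setOf_eq, not_le] at hω
      exact hω.le
    have hAc : P Aᶜ < 1 := lt_of_le_of_lt (measure_mono hcompl) h1
    have hPA : P A = 1 - P Aᶜ := by
      have := prob_compl_eq_one_sub (μ := P) hAmeas.compl
      rwa [compl_compl] at this
    rw [hPA]
    exact tsub_pos_iff_lt.mpr hAc
  have hPAtR : 0 < (P A).toReal := ENNReal.toReal_pos hPA_pos.ne' (measure_ne_top P A)
  -- conditional expectation notation
  set m : ℝ := condExpOn P (fun ω => U (X ω)) A with hmdef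
  have hmint : ∫ ω in A, U (X ω) ∂P = m * (P A).toReal := by
    rw [hmdef, condExpOn, div_mul_cancel₀ _ hPAtR.ne']
  -- U v ≤ m
  have hUvm : U v ≤ m := by
    have hint1 : ∫ ω in A, (U v) ∂P ≤ ∫ ω in A, U (X ω) ∂P := by
      refine setIntegral_mono_on (integrableOn_const (measure_ne_top P A))
        hUXint.integrableOn hAmeas fun ω hω => hU hω
    rw [setIntegral_const, smul_eq_mul, Measure.real] at hint1
    rw [hmdef, condExpOn, le_div_iff₀ hPAtR]
    linarith
  -- the set defining ginv
  set S' : Set ℝ := {x : ℝ | m ≤ U x} with hS'def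
  -- every element of S' is ≥ v
  have hS'lb : ∀ x ∈ S', v ≤ x := by
    intro x hx
    by_contra h
    push_neg at h
    obtain ⟨ε, hε, hstrict⟩ := hA
    set a := max x (v - ε) with hadef
    have ha : a < v := max_lt h (by linarith)
    set y₁ := (a + v) / 2 with hy₁
    set y₂ := (y₁ + v) / 2 with hy₂
    have h1 : a < y₁ := by rw [hy₁]; linarith
    have h2 : y₁ < y₂ := by rw [hy₂]; linarith
    have h3 : y₂ < v := by rw [hy₂]; linarith
    have hm₁ : y₁ ∈ Set.Ioo (v - ε) v := ⟨lt_of_le_of_lt (le_max_right _ _) h1, h2.trans h3⟩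
    have hm₂ : y₂ ∈ Set.Ioo (v - ε) v :=
      ⟨lt_of_le_of_lt (le_max_right _ _) (h1.trans h2), h3⟩
    have hUx : U x ≤ U y₁ := hU ((le_max_left _ _).trans h1.le)
    have hUy : U y₁ < U y₂ := hstrict hm₁ hm₂ h2
    have hUyv : U y₂ ≤ U v := hU h3.le
    have : U x < m := by linarith
    exact absurd hx (not_le.mpr (by simpa [hS'def] using this))
  -- S' is nonempty
  have hS'ne : S'.Nonempty := by
    by_contra h
    push_neg at h
    have hlt : ∀ x, U x < m := by
      intro x
      by_contra h2
      push_neg at h2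
      have hx : x ∈ S' := h2
      rw [h] at hx
      exact hx
    set g : Ω → ℝ := fun ω => m - U (X ω) with hgdef
    have hgpos : ∀ ω, 0 < g ω := fun ω => sub_pos.mpr (hlt (X ω))
    have hgint : IntegrableOn g A P := ((integrable_const m).sub hUXint).integrableOn
    have hzero : ∫ ω in A, g ω ∂P = 0 := by
      rw [hgdef]
      rw [integral_sub (integrableOn_const (C := m) (measure_ne_top P A))
        hUXint.integrableOn]
      rw [setIntegral_const, smul_eq_mul, Measure.real, hmint]
      ring
    have hpos : 0 < ∫ ω in A, g ω ∂P := by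
      rw [setIntegral_pos_iff_support_of_nonneg_ae
        (Filter.Eventually.of_forall fun ω => (hgpos ω).le) hgint]
      have hsupp : Function.support g ∩ A = A := by
        apply Set.inter_eq_self_of_subset_right
        intro ω _
        exact (hgpos ω).ne'
      rw [hsupp]
      exact hPA_pos
    exact absurd hzero hpos.ne'
  have hS'bdd : BddBelow S' := ⟨v, hS'lb⟩
  have hTQLM : TQLM P X α U = sInf S' := rfl
  constructor
  · rw [hTQLM]
    exact le_csInf hS'ne hS'lb
  · -- Jensen's inequality
    haveI : NeZero (P.restrict A) :=
      ⟨fun h => hPA_pos.ne' ((Measure.restrict_eq_zero).mp h)⟩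
    have havg : ∀ f : Ω → ℝ, condExpOn P f A = ⨍ ω, f ω ∂(P.restrict A) := by
      intro f
      rw [average_eq, measureReal_restrict_apply_univ, Measure.real, smul_eq_mul, condExpOn, div_eq_inv_mul]
    have hjensen : (⨍ ω, U (X ω) ∂(P.restrict A)) ≤ U (⨍ ω, X ω ∂(P.restrict A)) := by
      refine hUconc.le_map_average hUc.continuousOn isClosed_univ
        (Filter.Eventually.of_forall fun ω => Set.mem_univ _) hXint.restrict ?_
      exact hUXint.restrict
    have hmU : m ≤ U (CTE P X α) := by
      rw [hmdef, havg, CTE, havg]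
      exact hjensen
    rw [hTQLM]
    exact csInf_le hS'bdd hmU
end

section
/- Let X be an integrable real-valued random variable with continuous distribution function, α ∈ (0,1), and U : ℝ → ℝ increasing, continuous and convex with U(X) integrable, such that Assumption (A) holds. Then ρ_U^α(X) ≥ CTE_α(X). -/
open MeasureTheory Real Set
open Filter Topology

/-- For convex increasing `U` satisfying Assumption (A),
`ρ_U^α(X) ≥ CTE_α(X)`. -/
theorem CTE_le_TQLM_of_convex
    {Ω : Type*} [MeasurableSpace Ω] (P : Measure Ω) [IsProbabilityMeasure P]
    (X : Ω → ℝ) (hX : Measurable X) (hXint : Integrable X P)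
    (hFX : Continuous (cdfR P X))
    (α : ℝ) (hα : α ∈ Set.Ioo (0:ℝ) 1)
    (U : ℝ → ℝ) (hU : Monotone U) (hUc : Continuous U)
    (hUconv : ConvexOn ℝ Set.univ U)
    (hUXint : Integrable (fun ω => U (X ω)) P)
    (hA : ∃ ε > 0, StrictMonoOn U (Set.Ioo (VaR P X α - ε) (VaR P X α))) :
    CTE P X α ≤ TQLM P X α U := by
  obtain ⟨hα0, hα1⟩ := hα
  set F : ℝ → ℝ := cdfR P X with hF
  set v : ℝ := VaR P X α with hv
  set A : Set Ω := tailEvent P X α with hAdef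
  have hAm : MeasurableSet A := measurableSet_le measurable_const hX
  have hFmono : Monotone F := by
    intro a b hab
    exact ENNReal.toReal_mono (measure_ne_top P _)
      (measure_mono fun ω hω => le_trans hω hab)
  -- the map measure
  set ν : Measure ℝ := P.map X with hν
  have hνIic : ∀ x : ℝ, ν (Iic x) = P {ω | X ω ≤ x} := by
    intro x
    rw [hν, Measure.map_apply hX measurableSet_Iic]
    rfl
  have hνprob : IsProbabilityMeasure ν := Measure.isProbabilityMeasure_map hX.aemeasurable
  -- S nonempty
  set S : Set ℝ := {x : ℝ | α ≤ F x} with hS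
  have htop : Tendsto F atTop (𝓝 1) := by
    have h1 : Tendsto (fun x => ν (Iic x)) atTop (𝓝 (ν univ)) :=
      tendsto_measure_Iic_atTop ν
    have h2 : Tendsto (fun x => (ν (Iic x)).toReal) atTop (𝓝 (ν univ).toReal) :=
      (ENNReal.tendsto_toReal (measure_ne_top ν _)).comp h1
    show Tendsto (fun x => (P {ω | X ω ≤ x}).toReal) atTop (𝓝 1)
    simpa [hF, cdfR, hνIic, measure_univ] using h2
  have hSne : S.Nonempty := by
    have := htop.eventually (eventually_ge_nhds hα1)
    rcases this.exists with ⟨x, hx⟩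
    exact ⟨x, hx⟩
  have hbot : Tendsto F atBot (𝓝 0) := by
    have h1 : Tendsto (fun x : ℝ => ν (Iic x)) atBot (𝓝 (ν (⋂ x : ℝ, Iic x))) :=
      tendsto_measure_iInter_atBot (fun i => measurableSet_Iic.nullMeasurableSet)
        monotone_Iic ⟨0, measure_ne_top ν _⟩
    have hempty : (⋂ x : ℝ, Iic x) = (∅ : Set ℝ) := by
      ext z
      simp only [mem_iInter, mem_Iic, mem_empty_iff_false, iff_false, not_forall, not_le]
      exact ⟨z - 1, by linarith⟩
    rw [hempty, measure_empty] at h1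
    have h2 : Tendsto (fun x : ℝ => (ν (Iic x)).toReal) atBot (𝓝 (0:ℝ)) := by
      simpa [Function.comp_def] using (ENNReal.tendsto_toReal (by simp)).comp h1
    show Tendsto (fun x => (P {ω | X ω ≤ x}).toReal) atBot (𝓝 0)
    simpa [hF, cdfR, hνIic] using h2
  have hbdd : BddBelow S := by
    have := hbot.eventually (eventually_lt_nhds hα0)
    rcases this.exists with ⟨x0, hx0⟩
    refine ⟨x0, fun y hy => ?_⟩
    by_contra hc
    push_neg at hc
    exact absurd (le_trans hy (hFmono hc.le)) (not_le.2 hx0)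
  have hSclosed : IsClosed S := by
    have : S = F ⁻¹' Ici α := rfl
    rw [this]
    exact isClosed_Ici.preimage hFX
  have hvS : α ≤ F v := hSclosed.csInf_mem hSne hbdd
  have hFvle : F v ≤ α := by
    have hten : Tendsto F (nhdsWithin v (Iio v)) (𝓝 (F v)) :=
      (hFX.continuousAt).continuousWithinAt
    refine le_of_tendsto hten ?_
    filter_upwards [self_mem_nhdsWithin] with x hx
    have hxv : x < v := hx
    have : x ∉ S := fun hmem => absurd (csInf_le hbdd hmem) (not_le.2 hxv)
    have hns : ¬ α ≤ F x := this
    exact (not_le.mp hns).le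
  -- P A > 0
  have hcompl : Aᶜ = {ω | X ω < v} := by
    ext ω; simp [hAdef, tailEvent, hv]
  have hPA1 : (P A).toReal + (P Aᶜ).toReal = 1 := by
    rw [← ENNReal.toReal_add (measure_ne_top P _) (measure_ne_top P _),
      measure_add_measure_compl hAm, measure_univ, ENNReal.toReal_one]
  have hPAc_le : (P Aᶜ).toReal ≤ α := by
    refine le_trans (ENNReal.toReal_mono (measure_ne_top P _)
      (measure_mono ?_)) hFvle
    rw [hcompl]; exact fun ω (hω : X ω < v) => hω.le
  have hPA : 0 < (P A).toReal := by linarith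
  have hPAne : P A ≠ 0 := by
    intro h; rw [h] at hPA; simp at hPA
  -- v ≤ CTE
  have hintmono : v * (P A).toReal ≤ ∫ ω in A, X ω ∂P := by
    have h1 : ∫ ω in A, (v : ℝ) ∂P ≤ ∫ ω in A, X ω ∂P := by
      refine setIntegral_mono_on (integrableOn_const (measure_ne_top P A) (by simp))
        hXint.integrableOn hAm ?_
      intro ω hω; exact hω
    rwa [setIntegral_const, smul_eq_mul, mul_comm] at h1
  have hvCTE : v ≤ CTE P X α := by
    rw [CTE, condExpOn, le_div_iff₀ hPA]
    exact hintmono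
  -- Jensen
  set y : ℝ := condExpOn P (fun ω => U (X ω)) A with hy
  have hrne : NeZero (P.restrict A) :=
    ⟨by simpa [Measure.restrict_eq_zero] using hPAne⟩
  have havg1 : ⨍ ω, X ω ∂(P.restrict A) = CTE P X α := by
    rw [average_eq, measureReal_restrict_apply_univ]
    simp [CTE, condExpOn, smul_eq_mul, div_eq_inv_mul, measureReal_def, hAdef]
  have havg2 : ⨍ ω, U (X ω) ∂(P.restrict A) = y := by
    rw [average_eq, measureReal_restrict_apply_univ]
    simp [hy, condExpOn, smul_eq_mul, div_eq_inv_mul, measureReal_def]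
  have hUy : U (CTE P X α) ≤ y := by
    have hj := hUconv.map_average_le (μ := P.restrict A) hUc.continuousOn isClosed_univ
      (Eventually.of_forall fun _ => mem_univ _) hXint.restrict hUXint.restrict
    rwa [havg1, havg2] at hj
  -- strict monotonicity setup
  obtain ⟨ε, hε, hstrict⟩ := hA
  set p : ℝ := v - 2 * ε / 3 with hp
  set q : ℝ := v - ε / 3 with hq
  have hpmem : p ∈ Ioo (v - ε) v := ⟨by rw [hp]; linarith, by rw [hp]; linarith⟩
  have hqmem : q ∈ Ioo (v - ε) v := ⟨by rw [hq]; linarith, by rw [hq]; linarith⟩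
  have hpq : p < q := by rw [hp, hq]; linarith
  have hqv : q < v := hqmem.2
  have hUpq : U p < U q := hstrict hpmem hqmem hpq
  set spq : ℝ := (U q - U p) / (q - p) with hspq_def
  have hspq : 0 < spq := div_pos (by linarith) (by linarith)
  have key : ∀ b c : ℝ, b < c → q ≤ c → U b < U c := by
    intro b c hbc hqc
    rcases lt_or_ge b q with hbq | hqb
    · have h1 : U b < U q := by
        rcases le_or_gt b p with hbp | hpb
        · exact lt_of_le_of_lt (hU hbp) hUpq
        · exact hstrict ⟨lt_trans hpmem.1 hpb, lt_trans hbq hqv⟩ hqmem hbq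
      exact lt_of_lt_of_le h1 (hU hqc)
    · have hs1 : spq ≤ (U c - U b) / (c - b) := by
        rcases eq_or_lt_of_le hqb with hqb' | hqb'
        · subst hqb'
          exact hUconv.slope_mono_adjacent (mem_univ p) (mem_univ c) hpq hbc
        · calc spq ≤ (U b - U q) / (b - q) :=
                hUconv.slope_mono_adjacent (mem_univ p) (mem_univ b) hpq hqb'
            _ ≤ (U c - U b) / (c - b) :=
                hUconv.slope_mono_adjacent (mem_univ q) (mem_univ c) hqb' hbc
      have hcb : 0 < c - b := by linarith
      have := (le_div_iff₀ hcb).1 hs1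
      nlinarith
  -- nonemptiness of the ginv set
  set T : Set ℝ := {x : ℝ | y ≤ U x} with hT
  have hTne : T.Nonempty := by
    set z : ℝ := q + max 0 (y - U q) / spq + 1 with hz
    have hdiv : 0 ≤ max 0 (y - U q) / spq := div_nonneg (le_max_left _ _) hspq.le
    have hqz : q < z := by rw [hz]; linarith
    have hs1 : spq ≤ (U z - U q) / (z - q) :=
      hUconv.slope_mono_adjacent (mem_univ p) (mem_univ z) hpq hqz
    have hzq : 0 < z - q := by linarith
    have h2 : spq * (z - q) ≤ U z - U q := (le_div_iff₀ hzq).1 hs1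
    have h3 : spq * (z - q) = max 0 (y - U q) + spq := by
      rw [hz]
      field_simp
      ring
    have h4 : y - U q ≤ max 0 (y - U q) := le_max_right _ _
    refine ⟨z, ?_⟩
    simp only [hT, mem_setOf_eq]
    nlinarith
  -- main inequality
  rw [TQLM, ginv]
  refine le_csInf hTne ?_
  intro b hb
  by_contra hc
  push_neg at hc
  have hqC : q ≤ CTE P X α := le_trans hqv.le hvCTE
  have := key b (CTE P X α) hc hqC
  have hyb : y ≤ U b := hb
  linarith [hUy]
end

section
/- Let X be an integrable real-valued random variable with continuous distribution function and α ∈ (0,1). Define U(x) = x for x ≤ VaR_α(X) and U(x) = VaR_α(X) for x > VaR_α(X). Then U is increasing, continuous and concave, satisfies Assumption (A), and the lower bound is attained: ρ_U^α(X) = VaR_α(X). -/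
open MeasureTheory Real Set

/-- With `U(x) = x` for `x ≤ VaR_α(X)` and `U(x) = VaR_α(X)` for
`x > VaR_α(X)` (i.e. `U x = min x (VaR_α(X))`), `U` is increasing, continuous,
concave, satisfies Assumption (A), and the lower bound is attained:
`ρ_U^α(X) = VaR_α(X)`. -/
theorem TQLM_lower_bound_attained
    {Ω : Type*} [MeasurableSpace Ω] (P : Measure Ω) [IsProbabilityMeasure P]
    (X : Ω → ℝ) (hX : Measurable X) (hXint : Integrable X P)
    (hFX : Continuous (cdfR P X))
    (α : ℝ) (hα : α ∈ Set.Ioo (0:ℝ) 1) :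
    Monotone (fun x => min x (VaR P X α)) ∧
    Continuous (fun x => min x (VaR P X α)) ∧
    ConcaveOn ℝ Set.univ (fun x => min x (VaR P X α)) ∧
    (∃ ε > 0, StrictMonoOn (fun x => min x (VaR P X α))
        (Set.Ioo (VaR P X α - ε) (VaR P X α))) ∧
    TQLM P X α (fun x => min x (VaR P X α)) = VaR P X α := by
  set v := VaR P X α with hv
  have hα0 := hα.1
  have hα1 := hα.2
  -- the pushforward measure
  have hmap : ∀ x : ℝ, cdfR P X x = ProbabilityTheory.cdf (P.map X) x := by
    intro x
    have : IsProbabilityMeasure (P.map X) := Measure.isProbabilityMeasure_map hX.aemeasurable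
    rw [ProbabilityTheory.cdf_eq_real, measureReal_def, Measure.map_apply hX measurableSet_Iic]
    rfl
  have hmono : Monotone (cdfR P X) := by
    intro x y hxy
    exact ENNReal.toReal_mono (measure_ne_top _ _)
      (measure_mono (fun ω (hω : X ω ≤ x) => le_trans hω hxy))
  -- the set defining VaR
  set S : Set ℝ := {x : ℝ | α ≤ (P {ω | X ω ≤ x}).toReal} with hS
  have hSc : S = {x : ℝ | α ≤ cdfR P X x} := rfl
  have hSne : S.Nonempty := by
    have : IsProbabilityMeasure (P.map X) := Measure.isProbabilityMeasure_map hX.aemeasurable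
    have h1 : ∀ᶠ x : ℝ in Filter.atTop, α ≤ ProbabilityTheory.cdf (P.map X) x :=
      (ProbabilityTheory.tendsto_cdf_atTop (P.map X)).eventually (eventually_ge_nhds hα1)
    obtain ⟨x, hx⟩ := h1.exists
    exact ⟨x, by rw [hSc]; simpa [hmap x] using hx⟩
  have hSbdd : BddBelow S := by
    have : IsProbabilityMeasure (P.map X) := Measure.isProbabilityMeasure_map hX.aemeasurable
    have h1 : ∀ᶠ x : ℝ in Filter.atBot, ProbabilityTheory.cdf (P.map X) x < α :=
      (ProbabilityTheory.tendsto_cdf_atBot (P.map X)).eventually (eventually_lt_nhds hα0)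
    obtain ⟨x0, hx0⟩ := h1.exists
    refine ⟨x0, fun y hy => ?_⟩
    by_contra hxy
    push_neg at hxy
    have : cdfR P X y ≤ cdfR P X x0 := hmono hxy.le
    have hy' : α ≤ cdfR P X y := hy
    rw [hmap x0] at this
    linarith
  -- cdf at VaR is at most α
  have hvle : cdfR P X v ≤ α := by
    by_contra h
    push_neg at h
    have hev : ∀ᶠ x in nhds v, α < cdfR P X x :=
      (hFX.continuousAt).eventually (eventually_gt_nhds h)
    have hev2 : ∀ᶠ x in nhdsWithin v (Set.Iio v), α < cdfR P X x ∧ x < v :=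
      (hev.filter_mono nhdsWithin_le_nhds).and self_mem_nhdsWithin
    obtain ⟨y, hy1, hy2⟩ := hev2.exists
    have : v ≤ y := csInf_le hSbdd (le_of_lt hy1)
    exact absurd this (not_le.mpr hy2)
  -- the tail event has positive probability
  have hA : tailEvent P X α = X ⁻¹' Set.Ici v := rfl
  have hAm : MeasurableSet (tailEvent P X α) := hX measurableSet_Ici
  have hPA : P (tailEvent P X α) ≠ 0 := by
    intro h0
    have hc : P (tailEvent P X α)ᶜ = 1 := by
      rw [prob_compl_eq_one_sub hAm, h0, tsub_zero]
    have hsub : (tailEvent P X α)ᶜ ⊆ {ω | X ω ≤ v} := by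
      intro ω hω
      simp only [tailEvent, Set.mem_compl_iff, Set.mem_setOf_eq, not_le] at hω
      exact le_of_lt hω
    have h1 : (1 : ENNReal) ≤ P {ω | X ω ≤ v} := hc ▸ measure_mono hsub
    have h2 : P {ω | X ω ≤ v} = 1 := le_antisymm prob_le_one h1
    have : cdfR P X v = 1 := by rw [cdfR, h2, ENNReal.toReal_one]
    linarith
  have hPAtop : P (tailEvent P X α) ≠ ⊤ := measure_ne_top _ _
  have hPAne : (P (tailEvent P X α)).toReal ≠ 0 := by
    simp [ENNReal.toReal_eq_zero_iff, hPA, hPAtop]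
  refine ⟨fun a b hab => min_le_min hab le_rfl,
    (continuous_id.min continuous_const),
    (concaveOn_id convex_univ).inf (concaveOn_const _ convex_univ),
    ⟨1, one_pos, fun a ha b hb hab => ?_⟩, ?_⟩
  · simp only [min_eq_left ha.2.le, min_eq_left hb.2.le]
    exact hab
  · -- the main computation
    have hint : ∫ ω in tailEvent P X α, min (X ω) v ∂P
        = (P (tailEvent P X α)).toReal * v := by
      rw [setIntegral_congr_fun hAm (g := fun _ => v)
        (fun ω hω => min_eq_right hω), setIntegral_const, smul_eq_mul, measureReal_def]
    have hcond : condExpOn P (fun ω => min (X ω) v) (tailEvent P X α) = v := by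
      rw [condExpOn, hint, mul_comm, mul_div_assoc, div_self hPAne, mul_one]
    rw [TQLM]
    have : condExpOn P (fun ω => min (X ω) v) (tailEvent P X α)
        = condExpOn P (fun ω => (fun x => min x (VaR P X α)) (X ω)) (tailEvent P X α) := rfl
    rw [← this, hcond, ginv]
    have hset : {x : ℝ | v ≤ min x v} = Set.Ici v := by
      ext x; simp [le_min_iff]
    rw [hset, csInf_Ici]
end

section
/- Let X be a real-valued random variable with continuous distribution function F_X and quantile function F_X^{-1}(u) = inf{x : F_X(x) ≥ u}, and let V be uniformly distributed on (0,1). Then for every α ∈ (0,1), the events {F_X^{-1}(V) ≥ VaR_α(F_X^{-1}(V))} and {V ≥ α} coincide. -/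
open MeasureTheory Real Set

/-- For `V` uniform on `(0,1)` and `F_X` continuous, the events
`{F_X⁻¹(V) ≥ VaR_α(F_X⁻¹(V))}` and `{V ≥ α}` coincide (almost surely). -/
theorem quantile_tail_event_eq
    {Ω : Type*} [MeasurableSpace Ω] (P : Measure Ω) [IsProbabilityMeasure P]
    (X : Ω → ℝ) (hX : Measurable X) (hFX : Continuous (cdfR P X))
    (V : Ω → ℝ) (hV : Measurable V)
    (hunif : P.map V = volume.restrict (Set.Ioo (0:ℝ) 1))
    (α : ℝ) (hα : α ∈ Set.Ioo (0:ℝ) 1) :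
    {ω | VaR P (fun ω => ginv (cdfR P X) (V ω)) α ≤ ginv (cdfR P X) (V ω)}
      =ᵐ[P] {ω | α ≤ V ω} := by
  classical
  obtain ⟨hα0, hα1⟩ := hα
  set F := cdfR P X with hFdef
  have hmapX : IsProbabilityMeasure (P.map X) := Measure.isProbabilityMeasure_map hX.aemeasurable
  have hF_eq : F = ProbabilityTheory.cdf (P.map X) := by
    funext x
    rw [ProbabilityTheory.cdf_eq_real, Measure.real, Measure.map_apply hX measurableSet_Iic]
    rfl
  have hF0 : ∀ x, (0:ℝ) ≤ F x := fun x => ENNReal.toReal_nonneg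
  have hF1 : ∀ x, F x ≤ 1 := by
    rw [hF_eq]; exact fun x => ProbabilityTheory.cdf_le_one _ x
  have hmono : Monotone F := by rw [hF_eq]; exact ProbabilityTheory.monotone_cdf _
  have htop : Filter.Tendsto F Filter.atTop (nhds 1) := by
    rw [hF_eq]; exact ProbabilityTheory.tendsto_cdf_atTop _
  have hbot : Filter.Tendsto F Filter.atBot (nhds 0) := by
    rw [hF_eq]; exact ProbabilityTheory.tendsto_cdf_atBot _
  have hne : ∀ u : ℝ, u < 1 → {x : ℝ | u ≤ F x}.Nonempty := by
    intro u hu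
    obtain ⟨x, hx⟩ := (htop.eventually (eventually_ge_nhds hu)).exists
    exact ⟨x, hx⟩
  have hbdd : ∀ u : ℝ, 0 < u → BddBelow {x : ℝ | u ≤ F x} := by
    intro u hu
    obtain ⟨x0, hx0⟩ := Filter.eventually_atBot.mp (hbot.eventually (eventually_lt_nhds hu))
    refine ⟨x0, fun y hy => ?_⟩
    by_contra hc
    exact absurd hy (not_le.mpr (hx0 y (le_of_not_ge hc)))
  have hcl : ∀ u : ℝ, IsClosed {x : ℝ | u ≤ F x} :=
    fun u => isClosed_le continuous_const hFX
  have hmem : ∀ u : ℝ, 0 < u → u < 1 → u ≤ F (ginv F u) := by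
    intro u h0 h1
    exact (hcl u).csInf_mem (hne u h1) (hbdd u h0)
  have hginv_mono : ∀ u v : ℝ, 0 < u → v < 1 → u ≤ v → ginv F u ≤ ginv F v := by
    intro u v hu hv huv
    exact csInf_le_csInf (hbdd u hu) (hne v hv) (fun x hx => le_trans huv hx)
  have hgalois : ∀ u x : ℝ, 0 < u → u < 1 → (ginv F u ≤ x ↔ u ≤ F x) := by
    intro u x h0 h1
    constructor
    · intro h; exact le_trans (hmem u h0 h1) (hmono h)
    · intro h; exact csInf_le (hbdd u h0) h
  -- V lands in (0,1) almost surely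
  have hS : ∀ᵐ ω ∂P, V ω ∈ Ioo (0:ℝ) 1 := by
    rw [MeasureTheory.ae_iff]
    have hset : {ω | ¬ V ω ∈ Ioo (0:ℝ) 1} = V ⁻¹' (Ioo (0:ℝ) 1)ᶜ := rfl
    rw [hset, ← Measure.map_apply hV measurableSet_Ioo.compl, hunif,
      Measure.restrict_apply measurableSet_Ioo.compl, Set.compl_inter_self]
    simp
  -- the law of ginv F ∘ V
  have hvol : ∀ a : ℝ, 0 ≤ a → a ≤ 1 →
      volume (Iic a ∩ Ioo (0:ℝ) 1) = ENNReal.ofReal a := by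
    intro a ha0 ha1
    rcases lt_or_eq_of_le ha1 with h | h
    · have he : Iic a ∩ Ioo (0:ℝ) 1 = Ioc 0 a := by
        ext v
        simp only [mem_inter_iff, mem_Iic, mem_Ioo, mem_Ioc]
        constructor
        · rintro ⟨h1, h2, _⟩; exact ⟨h2, h1⟩
        · rintro ⟨h1, h2⟩; exact ⟨h2, h1, lt_of_le_of_lt h2 h⟩
      rw [he, Real.volume_Ioc, sub_zero]
    · subst h
      have he : Iic (1:ℝ) ∩ Ioo (0:ℝ) 1 = Ioo 0 1 := by
        ext v
        simp only [mem_inter_iff, mem_Iic, mem_Ioo]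
        constructor
        · rintro ⟨_, h2⟩; exact h2
        · rintro ⟨h1, h2⟩; exact ⟨le_of_lt h2, h1, h2⟩
      rw [he, Real.volume_Ioo, sub_zero]
  have hlaw : ∀ x : ℝ, P {ω | ginv F (V ω) ≤ x} = ENNReal.ofReal (F x) := by
    intro x
    have h1 : {ω | ginv F (V ω) ≤ x} =ᵐ[P] {ω | V ω ≤ F x} := by
      filter_upwards [hS] with ω hω
      exact eq_iff_iff.mpr (hgalois (V ω) x hω.1 hω.2)
    have h2 : {ω | V ω ≤ F x} = V ⁻¹' Iic (F x) := rfl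
    rw [measure_congr h1, h2, ← Measure.map_apply hV measurableSet_Iic, hunif,
      Measure.restrict_apply measurableSet_Iic, hvol (F x) (hF0 x) (hF1 x)]
  -- VaR of the quantile transform
  have hVaR : VaR P (fun ω => ginv F (V ω)) α = ginv F α := by
    unfold VaR
    congr 1
    ext x
    simp only [mem_setOf_eq]
    rw [show P {ω | ginv F (V ω) ≤ x} = ENNReal.ofReal (F x) from hlaw x,
      ENNReal.toReal_ofReal (hF0 x)]
  rw [hVaR]
  filter_upwards [hS] with ω hω
  have hiff : ginv F α ≤ ginv F (V ω) ↔ α ≤ V ω := by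
    constructor
    · intro h
      by_contra hlt
      push_neg at hlt
      have hle : ginv F (V ω) ≤ ginv F α := hginv_mono _ _ hω.1 hα1 hlt.le
      have heq : ginv F (V ω) = ginv F α := le_antisymm hle h
      have hαq : α ≤ F (ginv F α) := hmem α hα0 hα1
      have hopen : IsOpen {t : ℝ | V ω < F t} := isOpen_lt continuous_const hFX
      have hqmem : ginv F α ∈ {t : ℝ | V ω < F t} := lt_of_lt_of_le hlt hαq
      obtain ⟨ε, hε, hball⟩ := Metric.isOpen_iff.mp hopen _ hqmem
      have hmemball : ginv F α - ε/2 ∈ Metric.ball (ginv F α) ε := by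
        rw [Metric.mem_ball, Real.dist_eq,
          show ginv F α - ε/2 - ginv F α = -(ε/2) by ring, abs_neg,
          abs_of_nonneg (by linarith)]
        linarith
      have ht : V ω ≤ F (ginv F α - ε/2) := le_of_lt (hball hmemball)
      have hcontra : ginv F (V ω) ≤ ginv F α - ε/2 := csInf_le (hbdd _ hω.1) ht
      rw [heq] at hcontra
      linarith
    · intro h
      exact hginv_mono _ _ hα0 hω.2 h
  exact eq_iff_iff.mpr hiff
end

section
/- Let X be a strictly positive random variable with continuous distribution function, α ∈ (0,1), and let U(x) = x^γ/γ for x > 0 with γ ≠ 0 (or U(x) = log x), with U(X) integrable. Then the Tail Quasi-Linear Mean is positively homogeneous: for every λ > 0, ρ_U^α(λX) = λ ρ_U^α(X). -/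
open MeasureTheory Real Set

/-- Generalized inverse on `(0,∞)`: `U⁻¹(y) = inf {x > 0 | U(x) ≥ y}`. -/
noncomputable def ginvPos (U : ℝ → ℝ) (y : ℝ) : ℝ := sInf {x : ℝ | 0 < x ∧ y ≤ U x}

/-- TQLM for a utility defined on `(0,∞)`. -/
noncomputable def TQLMpos {Ω : Type*} [MeasurableSpace Ω] (P : Measure Ω) (X : Ω → ℝ)
    (α : ℝ) (U : ℝ → ℝ) : ℝ :=
  ginvPos U (condExpOn P (fun ω => U (X ω)) (tailEvent P X α))


section Aux

open Pointwise

variable {Ω : Type*} [MeasurableSpace Ω]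

/-- Scaling of the generalized inverse on `(0,∞)`. -/
lemma ginvPos_scale {U : ℝ → ℝ} {lam y y' : ℝ} (hlam : 0 < lam)
    (h : ∀ x : ℝ, 0 < x → (y' ≤ U x ↔ y ≤ U (x / lam))) :
    ginvPos U y' = lam * ginvPos U y := by
  have hset : {x : ℝ | 0 < x ∧ y' ≤ U x} = lam • {x : ℝ | 0 < x ∧ y ≤ U x} := by
    ext x
    rw [Set.mem_smul_set_iff_inv_smul_mem₀ hlam.ne']
    simp only [smul_eq_mul, Set.mem_setOf_eq]
    constructor
    · rintro ⟨hx, hxy⟩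
      refine ⟨by positivity, ?_⟩
      rw [inv_mul_eq_div]
      exact (h x hx).1 hxy
    · rintro ⟨hx, hxy⟩
      have hx' : 0 < x := by
        by_contra hc
        push_neg at hc
        have : lam⁻¹ * x ≤ 0 := mul_nonpos_of_nonneg_of_nonpos (by positivity) hc
        linarith
      refine ⟨hx', (h x hx').2 ?_⟩
      rwa [inv_mul_eq_div] at hxy
  rw [ginvPos, ginvPos, hset, Real.sInf_smul_of_nonneg hlam.le, smul_eq_mul]

lemma cdfR_smul (P : Measure Ω) (X : Ω → ℝ) {lam : ℝ} (hlam : 0 < lam) (x : ℝ) :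
    cdfR P (fun ω => lam * X ω) x = cdfR P X (x / lam) := by
  unfold cdfR
  congr 2
  ext ω
  simp only [Set.mem_setOf_eq, le_div_iff₀ hlam, mul_comm]

lemma VaR_smul (P : Measure Ω) (X : Ω → ℝ) (α : ℝ) {lam : ℝ} (hlam : 0 < lam) :
    VaR P (fun ω => lam * X ω) α = lam * VaR P X α := by
  have hset : {x : ℝ | α ≤ (P {ω | lam * X ω ≤ x}).toReal}
      = lam • {x : ℝ | α ≤ (P {ω | X ω ≤ x}).toReal} := by
    ext x
    rw [Set.mem_smul_set_iff_inv_smul_mem₀ hlam.ne']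
    simp only [smul_eq_mul, Set.mem_setOf_eq]
    have : {ω | lam * X ω ≤ x} = {ω | X ω ≤ lam⁻¹ * x} := by
      ext ω
      simp only [Set.mem_setOf_eq]
      rw [le_inv_mul_iff₀ hlam]
    rw [this]
  rw [VaR, VaR, hset, Real.sInf_smul_of_nonneg hlam.le, smul_eq_mul]

lemma tailEvent_smul (P : Measure Ω) (X : Ω → ℝ) (α : ℝ) {lam : ℝ} (hlam : 0 < lam) :
    tailEvent P (fun ω => lam * X ω) α = tailEvent P X α := by
  unfold tailEvent
  rw [VaR_smul P X α hlam]
  ext ω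
  simp only [Set.mem_setOf_eq, mul_le_mul_iff_right₀ hlam]

/-- The tail event has positive probability. -/
lemma tailEvent_prob_pos (P : Measure Ω) [IsProbabilityMeasure P]
    (X : Ω → ℝ) (hX : Measurable X) (hXpos : ∀ ω, 0 < X ω)
    {α : ℝ} (hα : α ∈ Set.Ioo (0:ℝ) 1) :
    (P (tailEvent P X α)).toReal ≠ 0 := by
  set v : ℝ := VaR P X α with hv
  set S : Set ℝ := {x : ℝ | α ≤ cdfR P X x} with hS
  have hbdd : BddBelow S := by
    refine ⟨0, fun x hx => ?_⟩
    by_contra hc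
    push_neg at hc
    have hempty : {ω | X ω ≤ x} = (∅ : Set Ω) := by
      ext ω
      simp only [Set.mem_setOf_eq, Set.mem_empty_iff_false, iff_false, not_le]
      exact hc.trans (hXpos ω)
    have : cdfR P X x = 0 := by rw [cdfR, hempty]; simp
    rw [hS] at hx
    simp only [Set.mem_setOf_eq, this] at hx
    linarith [hα.1]
  have hlt : ∀ x, x < v → cdfR P X x < α := by
    intro x hxv
    by_contra hc
    push_neg at hc
    exact absurd (csInf_le hbdd hc) (not_le.2 hxv)
  -- bound the measure of {X < v}
  have hIio : P {ω | X ω < v} ≤ ENNReal.ofReal α := by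
    set s : ℕ → Set Ω := fun n => {ω | X ω ≤ v - 1 / (n + 1)} with hsdef
    have hmono : Monotone s := by
      intro n m hnm ω hω
      simp only [hsdef, Set.mem_setOf_eq] at hω ⊢
      have hc : (n:ℝ) + 1 ≤ (m:ℝ) + 1 := by exact_mod_cast Nat.add_le_add_right hnm 1
      have h1 : (1 : ℝ) / (m + 1) ≤ 1 / (n + 1) :=
        one_div_le_one_div_of_le (by positivity) hc
      linarith
    have hunion : ⋃ n, s n = {ω | X ω < v} := by
      ext ω
      simp only [Set.mem_iUnion, hsdef, Set.mem_setOf_eq]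
      constructor
      · rintro ⟨n, hn⟩
        have : (0:ℝ) < 1 / (n + 1) := by positivity
        linarith
      · intro hω
        obtain ⟨n, hn⟩ := exists_nat_one_div_lt (sub_pos.2 hω)
        exact ⟨n, by linarith⟩
    rw [← hunion, hmono.directed_le.measure_iUnion]
    refine iSup_le fun n => ?_
    have hxlt : v - 1 / (n + 1 : ℝ) < v := by
      have : (0:ℝ) < 1 / (n + 1) := by positivity
      linarith
    exact (ENNReal.le_ofReal_iff_toReal_le (measure_ne_top P _) hα.1.le).2
      (le_of_lt (hlt _ hxlt))
  have hAmeas : MeasurableSet (tailEvent P X α) := by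
    have : tailEvent P X α = X ⁻¹' Set.Ici v := rfl
    rw [this]
    exact hX measurableSet_Ici
  have hne : P (tailEvent P X α) ≠ 0 := by
    intro h0
    have hcompl : (tailEvent P X α)ᶜ = {ω | X ω < v} := by
      ext ω
      simp [tailEvent, not_le, hv]
    have := measure_compl hAmeas (measure_ne_top P _)
    rw [h0, hcompl, tsub_zero, measure_univ] at this
    rw [this] at hIio
    have : ENNReal.ofReal α < 1 := ENNReal.ofReal_lt_one.2 hα.2
    exact absurd hIio (not_le.2 this)
  exact ENNReal.toReal_ne_zero.2 ⟨hne, measure_ne_top P _⟩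

end Aux

/-- For `U(x) = x^γ/γ` (`γ ≠ 0`) or `U(x) = log x` on `(0,∞)`,
the Tail Quasi-Linear Mean is positively homogeneous: `ρ_U^α(λX) = λ ρ_U^α(X)`
for all `λ > 0`. -/
theorem TQLM_positively_homogeneous
    {Ω : Type*} [MeasurableSpace Ω] (P : Measure Ω) [IsProbabilityMeasure P]
    (X : Ω → ℝ) (hX : Measurable X) (hXpos : ∀ ω, 0 < X ω)
    (hFX : Continuous (cdfR P X))
    (α : ℝ) (hα : α ∈ Set.Ioo (0:ℝ) 1)
    (U : ℝ → ℝ)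
    (hU : (∃ γ : ℝ, γ ≠ 0 ∧ ∀ x : ℝ, 0 < x → U x = x ^ γ / γ) ∨
          (∀ x : ℝ, 0 < x → U x = Real.log x))
    (hUXint : Integrable (fun ω => U (X ω)) P)
    (lam : ℝ) (hlam : 0 < lam)
    (hUlamXint : Integrable (fun ω => U (lam * X ω)) P) :
    TQLMpos P (fun ω => lam * X ω) α U = lam * TQLMpos P X α U := by
  have htail := tailEvent_smul P X α hlam
  unfold TQLMpos
  rw [htail]
  set A := tailEvent P X α with hA
  set m := condExpOn P (fun ω => U (X ω)) A with hm
  rcases hU with ⟨γ, hγ, hUdef⟩ | hUdef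
  · -- power utility
    have hlg : (0:ℝ) < lam ^ γ := Real.rpow_pos_of_pos hlam γ
    have hcond : condExpOn P (fun ω => U (lam * X ω)) A = lam ^ γ * m := by
      have hfun : (fun ω => U (lam * X ω)) = fun ω => lam ^ γ * U (X ω) := by
        funext ω
        rw [hUdef _ (mul_pos hlam (hXpos ω)), hUdef _ (hXpos ω),
          Real.mul_rpow hlam.le (hXpos ω).le, mul_div_assoc]
      rw [hfun, hm, condExpOn, condExpOn, MeasureTheory.integral_const_mul, mul_div_assoc]
    rw [hcond]
    refine ginvPos_scale hlam fun x hx => ?_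
    rw [hUdef x hx, hUdef _ (div_pos hx hlam), Real.div_rpow hx.le hlam.le,
      div_right_comm, le_div_iff₀ hlg, mul_comm]
  · -- logarithmic utility
    have hPA : (P A).toReal ≠ 0 := tailEvent_prob_pos P X hX hXpos hα
    have hcond : condExpOn P (fun ω => U (lam * X ω)) A = Real.log lam + m := by
      have hfun : (fun ω => U (lam * X ω)) = fun ω => Real.log lam + U (X ω) := by
        funext ω
        rw [hUdef _ (mul_pos hlam (hXpos ω)), hUdef _ (hXpos ω),
          Real.log_mul hlam.ne' (hXpos ω).ne']
      rw [hfun, hm, condExpOn, condExpOn,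
        integral_add (integrableOn_const (C := Real.log lam) (measure_ne_top P A))
          hUXint.integrableOn,
        setIntegral_const, smul_eq_mul, add_div, measureReal_def, mul_div_cancel_left₀ _ hPA]
    rw [hcond]
    refine ginvPos_scale hlam fun x hx => ?_
    rw [hUdef x hx, hUdef _ (div_pos hx hlam), Real.log_div hx.ne' hlam.ne']
    constructor <;> intro h <;> linarith
end

section
/- Let γ > 0, α ∈ (0,1), and let X, Y be comonotone random variables, say X = F_X^{-1}(V) and Y = F_Y^{-1}(V) for V uniformly distributed on (0,1), with continuous distribution functions, such that (1−t)X + tY has a continuous distribution function for every t ∈ [0,1] and all relevant exponential moments are finite. Then the Tail Conditional Entropic Risk Measure is convex along this pair: for every λ ∈ [0,1], ρ_γ^α(λX + (1−λ)Y) ≤ λ ρ_γ^α(X) + (1−λ) ρ_γ^α(Y). -/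
open MeasureTheory Real Set

lemma tail_ae {Ω : Type*} [MeasurableSpace Ω] (P : Measure Ω) [IsProbabilityMeasure P]
    {α : ℝ} (hα : α ∈ Set.Ioo (0:ℝ) 1)
    {V : Ω → ℝ} (hV : Measurable V)
    (hunif : P.map V = volume.restrict (Set.Ioo (0:ℝ) 1))
    {h : ℝ → ℝ} (hh : Monotone h) {Z : Ω → ℝ} (hZdef : Z = fun ω => h (V ω))
    (hF : Continuous (cdfR P Z)) :
    tailEvent P Z α =ᵐ[P] V ⁻¹' (Set.Ioo α 1) := by
  subst hZdef
  set Z : Ω → ℝ := fun ω => h (V ω) with hZ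
  have hZm : Measurable Z := hh.measurable.comp hV
  have hmap : ∀ s : Set ℝ, MeasurableSet s → P (V ⁻¹' s) = volume (s ∩ Set.Ioo 0 1) := by
    intro s hs
    rw [← Measure.map_apply hV hs, hunif, Measure.restrict_apply hs]
  set S : Set ℝ := {x : ℝ | α ≤ (P {ω | Z ω ≤ x}).toReal} with hS
  have hFx : ∀ x, cdfR P Z x = (P {ω | Z ω ≤ x}).toReal := fun _ => rfl
  -- nonempty
  have hSne : S.Nonempty := by
    refine ⟨h ((1 + α) / 2), ?_⟩
    have hsub : V ⁻¹' (Set.Ioo 0 ((1+α)/2)) ⊆ {ω | Z ω ≤ h ((1+α)/2)} := by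
      intro ω hω
      exact hh (le_of_lt hω.2)
    have h1 : P (V ⁻¹' (Set.Ioo 0 ((1+α)/2))) = ENNReal.ofReal ((1+α)/2) := by
      rw [hmap _ measurableSet_Ioo, Set.inter_eq_left.mpr
        (Set.Ioo_subset_Ioo le_rfl (by linarith [hα.2])), Real.volume_Ioo, sub_zero]
    have h2 := measure_mono (μ := P) hsub
    rw [h1] at h2
    have h3 : ((1:ℝ)+α)/2 ≤ (P {ω | Z ω ≤ h ((1+α)/2)}).toReal := by
      have := ENNReal.toReal_mono (measure_ne_top _ _) h2
      rwa [ENNReal.toReal_ofReal (by linarith [hα.1])] at this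
    exact le_trans (by linarith [hα.2]) h3
  -- bddBelow
  have hSbdd : BddBelow S := by
    refine ⟨h (α/2) - 1, fun x hx => ?_⟩
    by_contra hxlt
    push_neg at hxlt
    have hsub : {ω | Z ω ≤ x} ⊆ V ⁻¹' (Set.Iio (α/2)) := by
      intro ω hω
      by_contra hge
      simp only [Set.mem_preimage, Set.mem_Iio, not_lt] at hge
      have : h (α/2) ≤ Z ω := hh hge
      have : h (α/2) ≤ x := le_trans this hω
      linarith
    have h1 : P (V ⁻¹' (Set.Iio (α/2))) ≤ ENNReal.ofReal (α/2) := by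
      rw [hmap _ measurableSet_Iio]
      refine le_trans (measure_mono (fun u hu => (Set.mem_Ioo.mpr ⟨hu.2.1, hu.1⟩ : u ∈ Set.Ioo 0 (α/2)))) ?_
      simp [Real.volume_Ioo]
    have h2 : (P {ω | Z ω ≤ x}).toReal ≤ α/2 := by
      have := ENNReal.toReal_mono ENNReal.ofReal_ne_top (le_trans (measure_mono hsub) h1)
      rwa [ENNReal.toReal_ofReal (by linarith [hα.1])] at this
    have : α ≤ (P {ω | Z ω ≤ x}).toReal := hx
    linarith [hα.1]
  have hv : VaR P Z α = sInf S := rfl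
  set v : ℝ := VaR P Z α with hvdef
  have hSclosed : IsClosed S := by
    have : S = cdfR P Z ⁻¹' Set.Ici α := rfl
    rw [this]
    exact isClosed_Ici.preimage hF
  have hvS : v ∈ S := by rw [hv]; exact hSclosed.csInf_mem hSne hSbdd
  have hFv_ge : α ≤ cdfR P Z v := hvS
  have hFv_le : cdfR P Z v ≤ α := by
    by_contra hlt
    push_neg at hlt
    obtain ⟨δ, hδ, hδ'⟩ := Metric.continuous_iff.mp hF v (cdfR P Z v - α) (by linarith)
    have hy : v - δ/2 ∈ S := by
      have hd : dist (v - δ/2) v < δ := by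
        rw [Real.dist_eq]
        have he : v - δ/2 - v = -(δ/2) := by ring
        rw [he, abs_neg, abs_of_nonneg (by linarith)]; linarith
      have h2 : |cdfR P Z (v - δ/2) - cdfR P Z v| < cdfR P Z v - α := hδ' (v - δ/2) hd
      have := abs_sub_lt_iff.mp h2
      have : α < cdfR P Z (v - δ/2) := by linarith [this.2]
      exact le_of_lt this
    have : v ≤ v - δ/2 := by rw [hv]; exact csInf_le hSbdd hy
    linarith
  have hFv : cdfR P Z v = α := le_antisymm hFv_le hFv_ge
  -- P {Z < v} = ofReal α
  have hlt_le : (P {ω | Z ω < v}).toReal ≤ α := by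
    rw [← hFv]
    exact ENNReal.toReal_mono (measure_ne_top _ _)
      (measure_mono fun ω (hω : Z ω < v) => le_of_lt hω)
  have hlt_ge : α ≤ (P {ω | Z ω < v}).toReal := by
    by_contra hc
    push_neg at hc
    set ε : ℝ := α - (P {ω | Z ω < v}).toReal with hε
    have hεpos : 0 < ε := by linarith
    obtain ⟨δ, hδ, hδ'⟩ := Metric.continuous_iff.mp hF v ε hεpos
    have h1 : |cdfR P Z (v - δ/2) - cdfR P Z v| < ε := by
      refine hδ' (v - δ/2) ?_
      rw [Real.dist_eq]
      have he : v - δ/2 - v = -(δ/2) := by ring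
      rw [he, abs_neg, abs_of_nonneg (by linarith)]; linarith
    have h2 : α - ε < cdfR P Z (v - δ/2) := by
      have h4 := (abs_sub_lt_iff.mp h1).2
      rw [hFv] at h4
      linarith
    have h3 : cdfR P Z (v - δ/2) ≤ (P {ω | Z ω < v}).toReal :=
      ENNReal.toReal_mono (measure_ne_top _ _)
        (measure_mono fun ω (hω : Z ω ≤ v - δ/2) => lt_of_le_of_lt hω (by linarith))
    rw [hε] at h2
    linarith
  have hPlt : P {ω | Z ω < v} = ENNReal.ofReal α := by
    rw [← le_antisymm hlt_le hlt_ge]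
    exact (ENNReal.ofReal_toReal (measure_ne_top _ _)).symm
  have hTcompl : tailEvent P Z α = {ω | Z ω < v}ᶜ := by
    ext ω; simp [tailEvent, not_lt, hvdef]
  have hPT : P (tailEvent P Z α) = ENNReal.ofReal (1 - α) := by
    have hmlt : MeasurableSet {ω | Z ω < v} := measurableSet_lt hZm measurable_const
    rw [hTcompl, measure_compl hmlt (measure_ne_top _ _), measure_univ, hPlt,
      ENNReal.ofReal_sub _ (le_of_lt hα.1), ENNReal.ofReal_one]
  -- upper set
  set S' : Set ℝ := {u : ℝ | v ≤ h u} with hS'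
  have hS'm : MeasurableSet S' := by
    have : S'.OrdConnected := ⟨fun x hx y _ z hz => le_trans hx (hh hz.1)⟩
    exact this.measurableSet
  have hTpre : tailEvent P Z α = V ⁻¹' S' := rfl
  have hvol : volume (S' ∩ Set.Ioo 0 1) = ENNReal.ofReal (1 - α) := by
    rw [← hmap S' hS'm, ← hTpre, hPT]
  have hsub' : Set.Ioo α 1 ⊆ S' := by
    intro u hu
    by_contra hus
    have hsubu : S' ∩ Set.Ioo 0 1 ⊆ Set.Ioo u 1 := by
      rintro w ⟨hw1, hw2⟩
      refine ⟨lt_of_not_ge fun hle => hus (le_trans hw1 (hh hle)), hw2.2⟩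
    have := measure_mono (μ := volume) hsubu
    rw [hvol, Real.volume_Ioo] at this
    have := (ENNReal.ofReal_le_ofReal_iff (by linarith [hu.2])).mp this
    linarith [hu.1]
  have hsubA : V ⁻¹' (Set.Ioo α 1) ⊆ tailEvent P Z α := by
    rw [hTpre]; exact Set.preimage_mono hsub'
  have hPA : P (V ⁻¹' (Set.Ioo α 1)) = ENNReal.ofReal (1 - α) := by
    rw [hmap _ measurableSet_Ioo, Set.inter_eq_left.mpr
      (Set.Ioo_subset_Ioo (le_of_lt hα.1) le_rfl), Real.volume_Ioo]
  have hdiff : P (tailEvent P Z α \ V ⁻¹' (Set.Ioo α 1)) = 0 := by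
    rw [measure_diff hsubA ((hV measurableSet_Ioo).nullMeasurableSet)
      (measure_ne_top _ _), hPT, hPA, tsub_self]
  rw [ae_eq_set]
  exact ⟨hdiff, by simp [Set.diff_eq_empty.mpr hsubA]⟩

lemma holder_exp {Ω : Type*} [MeasurableSpace Ω] (μ : Measure Ω) {a b : Ω → ℝ} {l : ℝ}
    (hl : l ∈ Set.Ioo (0:ℝ) 1)
    (ha : Integrable (fun ω => Real.exp (a ω)) μ)
    (hb : Integrable (fun ω => Real.exp (b ω)) μ)
    (hab : Integrable (fun ω => Real.exp (l * a ω + (1 - l) * b ω)) μ) :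
    ∫ ω, Real.exp (l * a ω + (1 - l) * b ω) ∂μ
      ≤ (∫ ω, Real.exp (a ω) ∂μ) ^ l * (∫ ω, Real.exp (b ω) ∂μ) ^ (1 - l) := by
  obtain ⟨hl0, hl1⟩ := hl
  have hpq : (1/l).HolderConjugate (1/(1-l)) := by
    rw [Real.holderConjugate_iff]
    constructor
    · rw [lt_div_iff₀ hl0]; linarith
    · rw [one_div, inv_inv, one_div, inv_inv]; ring
  have ham : AEMeasurable a μ := by
    have h1 : AEMeasurable (fun ω => Real.exp (a ω)) μ := ha.aemeasurable
    have : a = fun ω => Real.log (Real.exp (a ω)) := by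
      funext ω; rw [Real.log_exp]
    rw [this]
    exact Real.measurable_log.comp_aemeasurable h1
  have hbm : AEMeasurable b μ := by
    have h1 : AEMeasurable (fun ω => Real.exp (b ω)) μ := hb.aemeasurable
    have : b = fun ω => Real.log (Real.exp (b ω)) := by
      funext ω; rw [Real.log_exp]
    rw [this]
    exact Real.measurable_log.comp_aemeasurable h1
  set F : Ω → ENNReal := fun ω => ENNReal.ofReal (Real.exp (l * a ω)) with hF
  set G : Ω → ENNReal := fun ω => ENNReal.ofReal (Real.exp ((1 - l) * b ω)) with hG
  have hFm : AEMeasurable F μ :=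
    ENNReal.measurable_ofReal.comp_aemeasurable
      (Real.measurable_exp.comp_aemeasurable (aemeasurable_const.mul ham))
  have hGm : AEMeasurable G μ :=
    ENNReal.measurable_ofReal.comp_aemeasurable
      (Real.measurable_exp.comp_aemeasurable (aemeasurable_const.mul hbm))
  have key := ENNReal.lintegral_mul_le_Lp_mul_Lq μ hpq hFm hGm
  have hmul : ∀ ω, (F * G) ω = ENNReal.ofReal (Real.exp (l * a ω + (1 - l) * b ω)) := by
    intro ω
    simp only [Pi.mul_apply, hF, hG, ← ENNReal.ofReal_mul (Real.exp_nonneg _), ← Real.exp_add]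
  have hFp : ∀ ω, F ω ^ (1/l) = ENNReal.ofReal (Real.exp (a ω)) := by
    intro ω
    show ENNReal.ofReal (Real.exp (l * a ω)) ^ (1/l) = _
    rw [ENNReal.ofReal_rpow_of_pos (Real.exp_pos _), ← Real.exp_mul]
    congr 2
    field_simp
  have hGq : ∀ ω, G ω ^ (1/(1-l)) = ENNReal.ofReal (Real.exp (b ω)) := by
    intro ω
    show ENNReal.ofReal (Real.exp ((1-l) * b ω)) ^ (1/(1-l)) = _
    rw [ENNReal.ofReal_rpow_of_pos (Real.exp_pos _), ← Real.exp_mul]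
    congr 2
    have : (1:ℝ) - l ≠ 0 := by linarith
    field_simp
  rw [lintegral_congr hmul] at key
  simp only [hFp, hGq] at key
  rw [← ofReal_integral_eq_lintegral_ofReal hab
      (Filter.Eventually.of_forall fun ω => Real.exp_nonneg _),
    ← ofReal_integral_eq_lintegral_ofReal ha
      (Filter.Eventually.of_forall fun ω => Real.exp_nonneg _),
    ← ofReal_integral_eq_lintegral_ofReal hb
      (Filter.Eventually.of_forall fun ω => Real.exp_nonneg _)] at key
  have h1l : (1:ℝ)/(1/l) = l := by field_simp
  have h2l : (1:ℝ)/(1/(1-l)) = 1 - l := by field_simp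
  rw [h1l, h2l] at key
  have hIa : 0 ≤ ∫ ω, Real.exp (a ω) ∂μ := integral_nonneg fun ω => Real.exp_nonneg _
  have hIb : 0 ≤ ∫ ω, Real.exp (b ω) ∂μ := integral_nonneg fun ω => Real.exp_nonneg _
  rw [ENNReal.ofReal_rpow_of_nonneg hIa (le_of_lt hl0),
    ENNReal.ofReal_rpow_of_nonneg hIb (by linarith),
    ← ENNReal.ofReal_mul (Real.rpow_nonneg hIa _)] at key
  exact (ENNReal.ofReal_le_ofReal_iff
    (mul_nonneg (Real.rpow_nonneg hIa _) (Real.rpow_nonneg hIb _))).mp key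

/-- For `γ > 0` the Tail Conditional Entropic Risk Measure is
convex along a pair of comonotone random variables `X = F_X⁻¹(V)`,
`Y = F_Y⁻¹(V)`. -/
theorem TCERM_convex_comonotone
    {Ω : Type*} [MeasurableSpace Ω] (P : Measure Ω) [IsProbabilityMeasure P]
    (γ : ℝ) (hγ : 0 < γ) (α : ℝ) (hα : α ∈ Set.Ioo (0:ℝ) 1)
    (V : Ω → ℝ) (hV : Measurable V)
    (hunif : P.map V = volume.restrict (Set.Ioo (0:ℝ) 1))
    (f g : ℝ → ℝ) (hf : Monotone f) (hg : Monotone g)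
    (hflc : ∀ x : ℝ, ContinuousWithinAt f (Set.Iio x) x)
    (hglc : ∀ x : ℝ, ContinuousWithinAt g (Set.Iio x) x)
    (X Y : Ω → ℝ) (hXdef : X = fun ω => f (V ω)) (hYdef : Y = fun ω => g (V ω))
    (hFX : Continuous (cdfR P X)) (hFY : Continuous (cdfR P Y))
    (hFmix : ∀ t ∈ Set.Icc (0:ℝ) 1,
      Continuous (cdfR P (fun ω => (1 - t) * X ω + t * Y ω)))
    (hint : ∀ t ∈ Set.Icc (0:ℝ) 1,
      Integrable (fun ω => Real.exp (γ * ((1 - t) * X ω + t * Y ω))) P)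
    (lam : ℝ) (hlam : lam ∈ Set.Icc (0:ℝ) 1) :
    TCERM P (fun ω => lam * X ω + (1 - lam) * Y ω) α γ
      ≤ lam * TCERM P X α γ + (1 - lam) * TCERM P Y α γ := by
  obtain ⟨hl0, hl1⟩ := hlam
  rcases eq_or_lt_of_le hl0 with h0 | h0
  · have hfun : (fun ω => lam * X ω + (1 - lam) * Y ω) = Y := by
      funext ω; rw [← h0]; ring
    rw [hfun, ← h0]; simp
  rcases eq_or_lt_of_le hl1 with h1 | h1
  · have hfun : (fun ω => lam * X ω + (1 - lam) * Y ω) = X := by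
      funext ω; rw [h1]; ring
    rw [hfun, h1]; simp
  -- main case 0 < lam < 1
  set A : Set Ω := V ⁻¹' (Set.Ioo α 1) with hA
  have hAm : MeasurableSet A := hV measurableSet_Ioo
  have hPA : P A = ENNReal.ofReal (1 - α) := by
    rw [hA, ← Measure.map_apply hV measurableSet_Ioo, hunif,
      Measure.restrict_apply measurableSet_Ioo,
      Set.inter_eq_left.mpr (Set.Ioo_subset_Ioo (le_of_lt hα.1) le_rfl), Real.volume_Ioo]
  have haeX : tailEvent P X α =ᵐ[P] A := tail_ae P hα hV hunif hf hXdef hFX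
  have haeY : tailEvent P Y α =ᵐ[P] A := tail_ae P hα hV hunif hg hYdef hFY
  have hmixmono : Monotone (fun u => lam * f u + (1 - lam) * g u) := fun u w huw =>
    add_le_add (mul_le_mul_of_nonneg_left (hf huw) hl0)
      (mul_le_mul_of_nonneg_left (hg huw) (by linarith))
  have hZdef : (fun ω => lam * X ω + (1 - lam) * Y ω) =
      fun ω => (fun u => lam * f u + (1 - lam) * g u) (V ω) := by
    rw [hXdef, hYdef]
  have hFZ : Continuous (cdfR P (fun ω => lam * X ω + (1 - lam) * Y ω)) := by
    have h := hFmix (1 - lam) ⟨by linarith, by linarith⟩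
    have e : (fun ω => (1 - (1 - lam)) * X ω + (1 - lam) * Y ω) =
        fun ω => lam * X ω + (1 - lam) * Y ω := by funext ω; ring
    rwa [e] at h
  have haeZ : tailEvent P (fun ω => lam * X ω + (1 - lam) * Y ω) α =ᵐ[P] A :=
    tail_ae P hα hV hunif hmixmono hZdef hFZ
  have hiX : Integrable (fun ω => Real.exp (γ * X ω)) P :=
    (hint 0 ⟨le_rfl, zero_le_one⟩).congr
      (Filter.Eventually.of_forall fun ω => by norm_num)
  have hiY : Integrable (fun ω => Real.exp (γ * Y ω)) P :=
    (hint 1 ⟨zero_le_one, le_rfl⟩).congr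
      (Filter.Eventually.of_forall fun ω => by norm_num)
  have hiZ : Integrable (fun ω => Real.exp (γ * (lam * X ω + (1 - lam) * Y ω))) P :=
    (hint (1 - lam) ⟨by linarith, by linarith⟩).congr
      (Filter.Eventually.of_forall fun ω => by ring_nf)
  have key : ∀ Z' : Ω → ℝ, tailEvent P Z' α =ᵐ[P] A →
      TCERM P Z' α γ = (1/γ) * Real.log ((∫ ω in A, Real.exp (γ * Z' ω) ∂P) / (1 - α)) := by
    intro Z' hae
    unfold TCERM condExpOn
    rw [setIntegral_congr_set hae, measure_congr hae, hPA,
      ENNReal.toReal_ofReal (by linarith [hα.2])]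
  set IX : ℝ := ∫ ω in A, Real.exp (γ * X ω) ∂P with hIX
  set IY : ℝ := ∫ ω in A, Real.exp (γ * Y ω) ∂P with hIY
  set IL : ℝ := ∫ ω in A, Real.exp (γ * (lam * X ω + (1 - lam) * Y ω)) ∂P with hIL
  have hTX : TCERM P X α γ = (1/γ) * Real.log (IX / (1 - α)) := key X haeX
  have hTY : TCERM P Y α γ = (1/γ) * Real.log (IY / (1 - α)) := key Y haeY
  have hTZ : TCERM P (fun ω => lam * X ω + (1 - lam) * Y ω) α γ =
      (1/γ) * Real.log (IL / (1 - α)) := key _ haeZ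
  have hPApos : 0 < P A := by rw [hPA]; exact ENNReal.ofReal_pos.mpr (by linarith [hα.2])
  have hpos : ∀ c : Ω → ℝ, Integrable (fun ω => Real.exp (γ * c ω)) P →
      0 < ∫ ω in A, Real.exp (γ * c ω) ∂P := by
    intro c hc
    rw [integral_pos_iff_support_of_nonneg (fun ω => Real.exp_nonneg _) hc.restrict]
    have hsupp : Function.support (fun ω => Real.exp (γ * c ω)) = Set.univ := by
      ext ω; simp [Function.support, Real.exp_ne_zero]
    rw [hsupp, Measure.restrict_apply_univ]
    exact hPApos
  have hIXpos : 0 < IX := hpos X hiX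
  have hIYpos : 0 < IY := hpos Y hiY
  have hILpos : 0 < IL := hpos _ hiZ
  -- Hölder
  have hhold : IL ≤ IX ^ lam * IY ^ (1 - lam) := by
    have h := holder_exp (P.restrict A) (⟨h0, h1⟩ : lam ∈ Set.Ioo (0:ℝ) 1)
      (a := fun ω => γ * X ω) (b := fun ω => γ * Y ω) hiX.restrict hiY.restrict
      (hiZ.restrict.congr (Filter.Eventually.of_forall fun ω => by ring_nf))
    have e : (fun ω => Real.exp (lam * (γ * X ω) + (1 - lam) * (γ * Y ω))) =
        fun ω => Real.exp (γ * (lam * X ω + (1 - lam) * Y ω)) := by funext ω; ring_nf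
    rw [hIL]
    calc (∫ ω in A, Real.exp (γ * (lam * X ω + (1 - lam) * Y ω)) ∂P)
        = ∫ ω in A, Real.exp (lam * (γ * X ω) + (1 - lam) * (γ * Y ω)) ∂P := by rw [e]
      _ ≤ _ := h
  have hlog : Real.log IL ≤ lam * Real.log IX + (1 - lam) * Real.log IY := by
    calc Real.log IL ≤ Real.log (IX ^ lam * IY ^ (1 - lam)) := Real.log_le_log hILpos hhold
      _ = lam * Real.log IX + (1 - lam) * Real.log IY := by
          rw [Real.log_mul (ne_of_gt (Real.rpow_pos_of_pos hIXpos _))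
            (ne_of_gt (Real.rpow_pos_of_pos hIYpos _)),
            Real.log_rpow hIXpos, Real.log_rpow hIYpos]
  have h1γ : 0 < 1/γ := by positivity
  have h1α : (0:ℝ) < 1 - α := by linarith [hα.2]
  rw [hTX, hTY, hTZ, Real.log_div (ne_of_gt hILpos) (ne_of_gt h1α),
    Real.log_div (ne_of_gt hIXpos) (ne_of_gt h1α),
    Real.log_div (ne_of_gt hIYpos) (ne_of_gt h1α)]
  calc (1/γ) * (Real.log IL - Real.log (1 - α))
      ≤ (1/γ) * (lam * Real.log IX + (1 - lam) * Real.log IY - Real.log (1 - α)) := by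
        apply mul_le_mul_of_nonneg_left (by linarith) h1γ.le
    _ = lam * (1/γ * (Real.log IX - Real.log (1 - α)))
        + (1 - lam) * (1/γ * (Real.log IY - Real.log (1 - α))) := by ring
end

section
/- Let α ∈ (0,1) and U : ℝ → ℝ be strictly increasing and continuous with generalized inverse U^{-1}. The capital allocation additivity property ρ_U^α(S) = Σ_{i=1}^n ρ_U^α(X_i | S), where S = X_1 + ⋯ + X_n, holds for every n ≥ 2 and every vector (X_1,…,X_n) of integrable random variables whose sum S has a continuous distribution function (and all conditional expectations exist), if and only if U is linear, i.e., U(x) = ax + b with a > 0. -/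
open MeasureTheory Real Set

section Ginv
variable {U : ℝ → ℝ}

lemma ginv_apply_U (hU : StrictMono U) (x : ℝ) : ginv U (U x) = x := by
  have h : {y : ℝ | U x ≤ U y} = Set.Ici x := by
    ext y; simp [hU.le_iff_le]
  rw [ginv, h, csInf_Ici]

lemma ginv_bounds (hU : StrictMono U) {a b y : ℝ} (h1 : U a ≤ y) (h2 : y ≤ U b) :
    a ≤ ginv U y ∧ ginv U y ≤ b := by
  have hsub : {x : ℝ | y ≤ U x} ⊆ Set.Ici a := by
    intro x hx
    by_contra hxa
    rw [Set.mem_Ici, not_le] at hxa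
    exact absurd (le_trans h1 hx) (not_le.mpr (hU hxa))
  have hb : b ∈ {x : ℝ | y ≤ U x} := h2
  refine ⟨le_csInf ⟨b, hb⟩ (fun x hx => hsub hx), csInf_le ⟨a, fun x hx => hsub hx⟩ hb⟩

lemma exists_mid (hU : StrictMono U) (hUc : Continuous U) (x y : ℝ) :
    ∃ c, U c = (U x + U y) / 2 := by
  rcases le_total x y with h | h
  · have hmem : (U x + U y) / 2 ∈ Set.Icc (U x) (U y) := by
      have := hU.monotone h; constructor <;> linarith
    obtain ⟨c, _, hc⟩ := intermediate_value_Icc h hUc.continuousOn hmem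
    exact ⟨c, hc⟩
  · have hmem : (U x + U y) / 2 ∈ Set.Icc (U y) (U x) := by
      have := hU.monotone h; constructor <;> linarith
    obtain ⟨c, _, hc⟩ := intermediate_value_Icc h hUc.continuousOn hmem
    exact ⟨c, by linarith [hc]⟩

lemma U_ginv_mid (hU : StrictMono U) (hUc : Continuous U) (x y : ℝ) :
    U (ginv U ((U x + U y) / 2)) = (U x + U y) / 2 := by
  obtain ⟨c, hc⟩ := exists_mid hU hUc x y
  rw [← hc, ginv_apply_U hU]

end Ginv

lemma construction_ineq
    (α : ℝ) (hα0 : 0 < α) (hα1 : α < 1)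
    {U : ℝ → ℝ} (hU : StrictMono U) (hUc : Continuous U)
    (H : ∀ (Ω : Type) (_ : MeasurableSpace Ω) (P : Measure Ω), IsProbabilityMeasure P →
      ∀ n : ℕ, 2 ≤ n → ∀ X : Fin n → Ω → ℝ,
        (∀ i, Measurable (X i)) → (∀ i, Integrable (X i) P) →
        (∀ i, Integrable (fun ω => U (X i ω)) P) →
        Integrable (fun ω => U (∑ i, X i ω)) P →
        Continuous (cdfR P (fun ω => ∑ i, X i ω)) →
        TQLM P (fun ω => ∑ i, X i ω) α U =
          ∑ i, ginv U (condExpOn P (fun ω => U (X i ω))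
            (tailEvent P (fun ω => ∑ i, X i ω) α)))
    (p q z0 ε : ℝ) (hε0 : 0 < ε) (hε1 : ε ≤ 1) :
    z0 - ginv U ((U (z0 + ε - p) + U (z0 + ε - q)) / 2) ≤ ginv U ((U p + U q) / 2) ∧
      ginv U ((U p + U q) / 2) ≤ z0 + ε - ginv U ((U (z0 - p) + U (z0 - q)) / 2) := by
  have h1α : (1:ℝ) - α ≠ 0 := by linarith
  set m : ℝ := z0 + ε / 2 with hm
  have hz0m : z0 ≤ m := by rw [hm]; linarith
  have hmz : m ≤ z0 + ε := by rw [hm]; linarith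
  set c2 : ENNReal := ENNReal.ofReal (1 - α) * (ENNReal.ofReal ε)⁻¹ with hc2
  set P : Measure ℝ := ENNReal.ofReal α • volume.restrict (Set.Ioc (z0 - 1) z0) +
      c2 • volume.restrict (Set.Ioc z0 (z0 + ε)) with hP
  have hεne : ENNReal.ofReal ε ≠ 0 := by
    simp only [ne_eq, ENNReal.ofReal_eq_zero, not_le]; exact hε0
  have hεtop : ENNReal.ofReal ε ≠ ⊤ := ENNReal.ofReal_ne_top
  have hc2top : c2 ≠ ⊤ := by
    rw [hc2]
    exact ENNReal.mul_ne_top ENNReal.ofReal_ne_top (by simp [hεne])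
  have hvolI1 : volume (Set.Ioc (z0 - 1) z0) = 1 := by
    rw [Real.volume_Ioc, show z0 - (z0 - 1) = 1 by ring, ENNReal.ofReal_one]
  have hvolI2 : volume (Set.Ioc z0 (z0 + ε)) = ENNReal.ofReal ε := by
    rw [Real.volume_Ioc, show z0 + ε - z0 = ε by ring]
  have hc2I2 : c2 * ENNReal.ofReal ε = ENNReal.ofReal (1 - α) := by
    rw [hc2, mul_assoc, ENNReal.inv_mul_cancel hεne hεtop, mul_one]
  have hPI : IsProbabilityMeasure P := by
    constructor
    rw [hP]
    simp only [Measure.add_apply, Measure.smul_apply, smul_eq_mul, Measure.restrict_apply_univ]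
    rw [hvolI1, hvolI2, mul_one, hc2I2, ← ENNReal.ofReal_add (le_of_lt hα0) (by linarith)]
    norm_num
  set X0 : ℝ → ℝ := fun ω => if ω ≤ m then p else q with hX0
  set X : Fin 2 → ℝ → ℝ := ![X0, fun ω => ω - X0 ω] with hX
  have hsum : (fun ω => ∑ i, X i ω) = id := by
    funext ω
    rw [Fin.sum_univ_two]
    show X0 ω + (ω - X0 ω) = ω
    ring
  have hX0m : Measurable X0 := by
    rw [hX0]
    exact Measurable.ite measurableSet_Iic measurable_const measurable_const
  have hXm : ∀ i, Measurable (X i) := by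
    intro i
    fin_cases i
    · simpa [hX] using hX0m
    · show Measurable (fun ω : ℝ => ω - X0 ω); exact measurable_id.sub hX0m
  have hIOn : ∀ g : ℝ → ℝ, Continuous g → ∀ a b : ℝ, IntegrableOn g (Set.Ioc a b) volume :=
    fun g hg a b => hg.integrableOn_Ioc
  have hpw : ∀ f g : ℝ → ℝ, Continuous f → Continuous g → ∀ a b : ℝ,
      IntegrableOn (fun ω => if ω ≤ m then f ω else g ω) (Set.Ioc a b) volume := by
    intro f g hf hg a b
    have heq : (fun ω => if ω ≤ m then f ω else g ω) = (Set.Iic m).piecewise f g := by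
      funext ω
      by_cases h : ω ≤ m <;> simp [Set.piecewise, h, Set.mem_Iic]
    rw [heq]
    exact Integrable.piecewise measurableSet_Iic
      (Integrable.restrict (hIOn f hf a b)) (Integrable.restrict (hIOn g hg a b))
  have hintP : ∀ f : ℝ → ℝ, IntegrableOn f (Set.Ioc (z0 - 1) z0) volume →
      IntegrableOn f (Set.Ioc z0 (z0 + ε)) volume → Integrable f P := by
    intro f h1 h2
    rw [hP]
    exact (h1.smul_measure ENNReal.ofReal_ne_top).add_measure (h2.smul_measure hc2top)
  have heqX1 : (fun ω => ω - X0 ω) = fun ω => if ω ≤ m then ω - p else ω - q := by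
    funext ω; simp only [hX0]; split_ifs <;> rfl
  have heqUX0 : (fun ω => U (X0 ω)) = fun ω => if ω ≤ m then U p else U q := by
    funext ω; simp only [hX0]; exact apply_ite U _ _ _
  have heqUX1 : (fun ω => U (ω - X0 ω)) = fun ω => if ω ≤ m then U (ω - p) else U (ω - q) := by
    funext ω; simp only [hX0]; split_ifs <;> rfl
  have hintX0 : Integrable X0 P := by
    rw [hX0]
    exact hintP _ (hpw _ _ continuous_const continuous_const _ _)
      (hpw _ _ continuous_const continuous_const _ _)
  have hintX1 : Integrable (fun ω => ω - X0 ω) P := by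
    rw [heqX1]
    exact hintP _
      (hpw _ _ (continuous_id.sub continuous_const) (continuous_id.sub continuous_const) _ _)
      (hpw _ _ (continuous_id.sub continuous_const) (continuous_id.sub continuous_const) _ _)
  have hintUX0 : Integrable (fun ω => U (X0 ω)) P := by
    rw [heqUX0]
    exact hintP _ (hpw _ _ continuous_const continuous_const _ _)
      (hpw _ _ continuous_const continuous_const _ _)
  have hintUX1 : Integrable (fun ω => U (ω - X0 ω)) P := by
    rw [heqUX1]
    exact hintP _
      (hpw _ _ (hUc.comp (continuous_id.sub continuous_const))
        (hUc.comp (continuous_id.sub continuous_const)) _ _)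
      (hpw _ _ (hUc.comp (continuous_id.sub continuous_const))
        (hUc.comp (continuous_id.sub continuous_const)) _ _)
  have hintUS : Integrable (fun ω => U (∑ i, X i ω)) P := by
    have h : (fun ω : ℝ => U (∑ i, X i ω)) = fun ω => U ω := by
      funext ω; rw [congrFun hsum ω]; rfl
    rw [h]
    exact hintP _ (hIOn _ hUc _ _) (hIOn _ hUc _ _)
  have hinter : ∀ a b x : ℝ, Set.Iic x ∩ Set.Ioc a b = Set.Ioc a (min b x) := by
    intro a b x; ext y
    simp only [Set.mem_inter_iff, Set.mem_Iic, Set.mem_Ioc, le_min_iff]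
    tauto
  have hPIic : ∀ x : ℝ, P (Set.Iic x) =
      ENNReal.ofReal α * ENNReal.ofReal (min z0 x - (z0 - 1)) +
        c2 * ENNReal.ofReal (min (z0 + ε) x - z0) := by
    intro x
    rw [hP]
    simp only [Measure.add_apply, Measure.smul_apply, smul_eq_mul]
    rw [Measure.restrict_apply measurableSet_Iic, Measure.restrict_apply measurableSet_Iic,
      hinter, hinter, Real.volume_Ioc, Real.volume_Ioc]
  have hcdfR : cdfR P id = fun x =>
      α * max (min z0 x - (z0 - 1)) 0 + ((1 - α) * ε⁻¹) * max (min (z0 + ε) x - z0) 0 := by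
    funext x
    show (P {ω : ℝ | id ω ≤ x}).toReal = _
    have hset : {ω : ℝ | id ω ≤ x} = Set.Iic x := rfl
    rw [hset, hPIic x,
      ENNReal.toReal_add (ENNReal.mul_ne_top ENNReal.ofReal_ne_top ENNReal.ofReal_ne_top)
        (ENNReal.mul_ne_top hc2top ENNReal.ofReal_ne_top),
      ENNReal.toReal_mul, ENNReal.toReal_mul, ENNReal.toReal_ofReal (le_of_lt hα0),
      ENNReal.toReal_ofReal', ENNReal.toReal_ofReal', hc2, ENNReal.toReal_mul,
      ENNReal.toReal_inv, ENNReal.toReal_ofReal (by linarith : (0:ℝ) ≤ 1 - α),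
      ENNReal.toReal_ofReal (le_of_lt hε0)]
  have hVaRset : {x : ℝ | α ≤ cdfR P id x} = Set.Ici z0 := by
    rw [hcdfR]; ext x
    simp only [Set.mem_setOf_eq, Set.mem_Ici]
    constructor
    · intro h
      by_contra hx
      push_neg at hx
      have h1 : min z0 x = x := min_eq_right (le_of_lt hx)
      have h2 : min (z0 + ε) x = x := min_eq_right (by linarith)
      rw [h1, h2] at h
      have h3 : max (x - z0) 0 = 0 := max_eq_right (by linarith)
      rw [h3, mul_zero, add_zero] at h
      have h4 : max (x - (z0 - 1)) 0 < 1 := by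
        rcases le_or_gt (x - (z0 - 1)) 0 with hc | hc
        · rw [max_eq_right hc]; norm_num
        · rw [max_eq_left (le_of_lt hc)]; linarith
      nlinarith
    · intro h
      have h1 : min z0 x = z0 := min_eq_left h
      rw [h1, show z0 - (z0 - 1) = 1 by ring, max_eq_left zero_le_one, mul_one]
      have h3 : (0:ℝ) ≤ (1 - α) * ε⁻¹ * max (min (z0 + ε) x - z0) 0 :=
        mul_nonneg (mul_nonneg (by linarith) (by positivity)) (le_max_right _ _)
      linarith
  have hVaR : VaR P id α = z0 := by
    show sInf {x : ℝ | α ≤ (P {ω | id ω ≤ x}).toReal} = z0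
    have h : {x : ℝ | α ≤ (P {ω | id ω ≤ x}).toReal} = {x : ℝ | α ≤ cdfR P id x} := rfl
    rw [h, hVaRset, csInf_Ici]
  have htail : tailEvent P id α = Set.Ici z0 := by
    unfold tailEvent
    rw [hVaR]
    rfl
  have hrestr : P.restrict (Set.Ici z0) = c2 • volume.restrict (Set.Ioc z0 (z0 + ε)) := by
    rw [hP, Measure.restrict_add, Measure.restrict_smul, Measure.restrict_smul]
    have h1 : (volume.restrict (Set.Ioc (z0 - 1) z0)).restrict (Set.Ici z0) = 0 := by
      rw [Measure.restrict_restrict measurableSet_Ici, Measure.restrict_eq_zero]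
      have hsub : Set.Ici z0 ∩ Set.Ioc (z0 - 1) z0 ⊆ {z0} := by
        intro y hy
        simp only [Set.mem_inter_iff, Set.mem_Ici, Set.mem_Ioc] at hy
        simp only [Set.mem_singleton_iff]
        linarith [hy.1, hy.2.2]
      exact measure_mono_null hsub Real.volume_singleton
    have h2 : (volume.restrict (Set.Ioc z0 (z0 + ε))).restrict (Set.Ici z0) =
        volume.restrict (Set.Ioc z0 (z0 + ε)) := by
      rw [Measure.restrict_restrict measurableSet_Ici]
      congr 1
      exact Set.inter_eq_self_of_subset_right (fun y hy => le_of_lt hy.1)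
    rw [h1, h2, smul_zero, zero_add]
  have hPA : P (Set.Ici z0) = ENNReal.ofReal (1 - α) := by
    rw [← Measure.restrict_apply_univ, hrestr]
    simp only [Measure.smul_apply, smul_eq_mul, Measure.restrict_apply_univ]
    rw [hvolI2, hc2I2]
  have hPAtoReal : (P (Set.Ici z0)).toReal = 1 - α := by
    rw [hPA, ENNReal.toReal_ofReal (by linarith)]
  have hc2toReal : c2.toReal = (1 - α) * ε⁻¹ := by
    rw [hc2, ENNReal.toReal_mul, ENNReal.toReal_inv,
      ENNReal.toReal_ofReal (by linarith : (0:ℝ) ≤ 1 - α), ENNReal.toReal_ofReal (le_of_lt hε0)]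
  have hcond : ∀ f : ℝ → ℝ, condExpOn P f (Set.Ici z0) =
      ε⁻¹ * ∫ ω in Set.Ioc z0 (z0 + ε), f ω := by
    intro f
    unfold condExpOn
    have hsetint : (∫ ω in Set.Ici z0, f ω ∂P) =
        ((1 - α) * ε⁻¹) * ∫ ω in Set.Ioc z0 (z0 + ε), f ω := by
      show (∫ ω, f ω ∂(P.restrict (Set.Ici z0))) = _
      rw [hrestr, integral_smul_measure, hc2toReal, smul_eq_mul]
    rw [hsetint, hPAtoReal]
    field_simp
  have hsplit : Set.Ioc z0 (z0 + ε) = Set.Ioc z0 m ∪ Set.Ioc m (z0 + ε) :=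
    (Set.Ioc_union_Ioc_eq_Ioc hz0m hmz).symm
  have hdisj : Disjoint (Set.Ioc z0 m) (Set.Ioc m (z0 + ε)) := Set.Ioc_disjoint_Ioc_of_le le_rfl
  have hsplitint : ∀ f g : ℝ → ℝ, Continuous f → Continuous g →
      (∫ ω in Set.Ioc z0 (z0 + ε), (if ω ≤ m then f ω else g ω)) =
        (∫ ω in Set.Ioc z0 m, f ω) + ∫ ω in Set.Ioc m (z0 + ε), g ω := by
    intro f g hf hg
    rw [hsplit, setIntegral_union hdisj measurableSet_Ioc (hpw f g hf hg z0 m)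
      (hpw f g hf hg m (z0 + ε))]
    congr 1
    · exact setIntegral_congr_fun measurableSet_Ioc (fun y hy => if_pos hy.2)
    · exact setIntegral_congr_fun measurableSet_Ioc (fun y hy => if_neg (not_le.mpr hy.1))
  have hvol1R : (volume (Set.Ioc z0 m)).toReal = ε / 2 := by
    rw [Real.volume_Ioc, hm, show z0 + ε / 2 - z0 = ε / 2 by ring,
      ENNReal.toReal_ofReal (by linarith)]
  have hvol2R : (volume (Set.Ioc m (z0 + ε))).toReal = ε / 2 := by
    rw [Real.volume_Ioc, hm, show z0 + ε - (z0 + ε / 2) = ε / 2 by ring,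
      ENNReal.toReal_ofReal (by linarith)]
  have hboundInt : ∀ (f : ℝ → ℝ) (a b lo hi : ℝ), Continuous f →
      (∀ y, y ∈ Set.Ioc a b → lo ≤ f y ∧ f y ≤ hi) →
      (volume (Set.Ioc a b)).toReal * lo ≤ (∫ ω in Set.Ioc a b, f ω) ∧
        (∫ ω in Set.Ioc a b, f ω) ≤ (volume (Set.Ioc a b)).toReal * hi := by
    intro f a b lo hi hf hb
    constructor
    · have h := setIntegral_mono_on (hIOn _ continuous_const a b) (hIOn f hf a b)
        measurableSet_Ioc (fun y hy => (hb y hy).1)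
      rwa [setIntegral_const, smul_eq_mul] at h
    · have h := setIntegral_mono_on (hIOn f hf a b) (hIOn _ continuous_const a b)
        measurableSet_Ioc (fun y hy => (hb y hy).2)
      rwa [setIntegral_const, smul_eq_mul] at h
  have hintX : ∀ i, Integrable (X i) P := by
    intro i; fin_cases i
    · simpa [hX] using hintX0
    · simpa [hX] using hintX1
  have hintUX : ∀ i, Integrable (fun ω => U (X i ω)) P := by
    intro i; fin_cases i
    · simpa [hX] using hintUX0
    · simpa [hX] using hintUX1
  have hcdfC : Continuous (cdfR P (fun ω => ∑ i, X i ω)) := by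
    rw [hsum, hcdfR]
    fun_prop
  have E := H ℝ inferInstance P hPI 2 le_rfl X hXm hintX hintUX hintUS hcdfC
  rw [hsum, Fin.sum_univ_two] at E
  simp only [hX, Matrix.cons_val_zero, Matrix.cons_val_one, Matrix.head_cons, id_eq] at E
  unfold TQLM at E
  rw [htail] at E
  simp only [id_eq] at E
  -- values of the three conditional expectations
  have hc0val : condExpOn P (fun ω => U (X0 ω)) (Set.Ici z0) = (U p + U q) / 2 := by
    rw [heqUX0, hcond, hsplitint _ _ continuous_const continuous_const,
      setIntegral_const, setIntegral_const, measureReal_def, measureReal_def, hvol1R, hvol2R, smul_eq_mul, smul_eq_mul]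
    field_simp
  have hcS_bounds : U z0 ≤ condExpOn P (fun ω => U ω) (Set.Ici z0) ∧
      condExpOn P (fun ω => U ω) (Set.Ici z0) ≤ U (z0 + ε) := by
    have hb := hboundInt U z0 (z0 + ε) (U z0) (U (z0 + ε)) hUc
      (fun y hy => ⟨hU.monotone (le_of_lt hy.1), hU.monotone hy.2⟩)
    rw [hvolI2, ENNReal.toReal_ofReal (le_of_lt hε0)] at hb
    rw [hcond]
    constructor
    · have h := mul_le_mul_of_nonneg_left hb.1 (le_of_lt (inv_pos.mpr hε0))
      rwa [← mul_assoc, inv_mul_cancel₀ (ne_of_gt hε0), one_mul] at h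
    · have h := mul_le_mul_of_nonneg_left hb.2 (le_of_lt (inv_pos.mpr hε0))
      rwa [← mul_assoc, inv_mul_cancel₀ (ne_of_gt hε0), one_mul] at h
  have hc1_bounds : (U (z0 - p) + U (z0 - q)) / 2 ≤
      condExpOn P (fun ω => U (ω - X0 ω)) (Set.Ici z0) ∧
      condExpOn P (fun ω => U (ω - X0 ω)) (Set.Ici z0) ≤
        (U (z0 + ε - p) + U (z0 + ε - q)) / 2 := by
    have hb1 := hboundInt (fun ω => U (ω - p)) z0 m (U (z0 - p)) (U (z0 + ε - p))
      (hUc.comp (continuous_id.sub continuous_const))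
      (fun y hy => ⟨hU.monotone (by linarith [hy.1]), hU.monotone (by linarith [hy.2, hmz])⟩)
    have hb2 := hboundInt (fun ω => U (ω - q)) m (z0 + ε) (U (z0 - q)) (U (z0 + ε - q))
      (hUc.comp (continuous_id.sub continuous_const))
      (fun y hy => ⟨hU.monotone (by linarith [hy.1, hz0m]), hU.monotone (by linarith [hy.2])⟩)
    rw [Real.volume_Ioc] at hb1 hb2
    rw [hm, show z0 + ε / 2 - z0 = ε / 2 by ring,
      ENNReal.toReal_ofReal (by linarith)] at hb1
    rw [hm, show z0 + ε - (z0 + ε / 2) = ε / 2 by ring,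
      ENNReal.toReal_ofReal (by linarith)] at hb2
    rw [heqUX1, hcond, hsplitint (fun ω => U (ω - p)) (fun ω => U (ω - q))
      (hUc.comp (continuous_id.sub continuous_const))
      (hUc.comp (continuous_id.sub continuous_const))]
    have hineq1 : ε / 2 * U (z0 - p) + ε / 2 * U (z0 - q) ≤
        (∫ ω in Set.Ioc z0 m, U (ω - p)) + ∫ ω in Set.Ioc m (z0 + ε), U (ω - q) :=
      add_le_add hb1.1 hb2.1
    have hineq2 : (∫ ω in Set.Ioc z0 m, U (ω - p)) + ∫ ω in Set.Ioc m (z0 + ε), U (ω - q) ≤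
        ε / 2 * U (z0 + ε - p) + ε / 2 * U (z0 + ε - q) :=
      add_le_add hb1.2 hb2.2
    constructor
    · have h := mul_le_mul_of_nonneg_left hineq1 (le_of_lt (inv_pos.mpr hε0))
      have heq : ε⁻¹ * (ε / 2 * U (z0 - p) + ε / 2 * U (z0 - q)) =
          (U (z0 - p) + U (z0 - q)) / 2 := by field_simp
      linarith [heq ▸ h]
    · have h := mul_le_mul_of_nonneg_left hineq2 (le_of_lt (inv_pos.mpr hε0))
      have heq : ε⁻¹ * (ε / 2 * U (z0 + ε - p) + ε / 2 * U (z0 + ε - q)) =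
          (U (z0 + ε - p) + U (z0 + ε - q)) / 2 := by field_simp
      linarith [heq ▸ h]
  -- assemble
  rw [hc0val] at E
  have hgS := ginv_bounds hU hcS_bounds.1 hcS_bounds.2
  have hM0 : U (ginv U ((U (z0 - p) + U (z0 - q)) / 2)) = (U (z0 - p) + U (z0 - q)) / 2 :=
    U_ginv_mid hU hUc _ _
  have hM1 : U (ginv U ((U (z0 + ε - p) + U (z0 + ε - q)) / 2)) =
      (U (z0 + ε - p) + U (z0 + ε - q)) / 2 := U_ginv_mid hU hUc _ _
  have hgc1 := ginv_bounds hU (y := condExpOn P (fun ω => U (ω - X0 ω)) (Set.Ici z0))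
    (a := ginv U ((U (z0 - p) + U (z0 - q)) / 2))
    (b := ginv U ((U (z0 + ε - p) + U (z0 + ε - q)) / 2))
    (by rw [hM0]; exact hc1_bounds.1) (by rw [hM1]; exact hc1_bounds.2)
  constructor
  · linarith [hgS.1, hgc1.2, E]
  · linarith [hgS.2, hgc1.1, E]

lemma forward_linear
    (α : ℝ) (hα0 : 0 < α) (hα1 : α < 1)
    {U : ℝ → ℝ} (hU : StrictMono U) (hUc : Continuous U)
    (H : ∀ (Ω : Type) (_ : MeasurableSpace Ω) (P : Measure Ω), IsProbabilityMeasure P →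
      ∀ n : ℕ, 2 ≤ n → ∀ X : Fin n → Ω → ℝ,
        (∀ i, Measurable (X i)) → (∀ i, Integrable (X i) P) →
        (∀ i, Integrable (fun ω => U (X i ω)) P) →
        Integrable (fun ω => U (∑ i, X i ω)) P →
        Continuous (cdfR P (fun ω => ∑ i, X i ω)) →
        TQLM P (fun ω => ∑ i, X i ω) α U =
          ∑ i, ginv U (condExpOn P (fun ω => U (X i ω))
            (tailEvent P (fun ω => ∑ i, X i ω) α))) :
    ∃ a b : ℝ, 0 < a ∧ ∀ x : ℝ, U x = a * x + b := by
  have ineq := construction_ineq α hα0 hα1 hU hUc H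
  have keyM : ∀ p q z0 : ℝ,
      ginv U ((U p + U q) / 2) + ginv U ((U (z0 - p) + U (z0 - q)) / 2) = z0 := by
    intro p q z0
    apply le_antisymm
    · apply le_of_forall_pos_le_add
      intro ε hε
      have hδ0 : 0 < min ε 1 := lt_min hε one_pos
      have hδ1 : min ε 1 ≤ 1 := min_le_right _ _
      have h := (ineq p q z0 (min ε 1) hδ0 hδ1).2
      linarith [min_le_left ε 1]
    · apply le_of_forall_pos_le_add
      intro ε hε
      have hδ0 : 0 < min ε 1 := lt_min hε one_pos
      have hδ1 : min ε 1 ≤ 1 := min_le_right _ _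
      have h := (ineq p q (z0 - min ε 1) (min ε 1) hδ0 hδ1).1
      rw [show z0 - min ε 1 + min ε 1 - p = z0 - p by ring,
        show z0 - min ε 1 + min ε 1 - q = z0 - q by ring] at h
      linarith [min_le_left ε 1]
  have hmidM : ∀ x y : ℝ, ginv U ((U x + U y) / 2) = (x + y) / 2 := by
    intro x y
    have h1 := keyM x y (x + y)
    rw [show x + y - x = y by ring, show x + y - y = x by ring] at h1
    have hsym : ginv U ((U y + U x) / 2) = ginv U ((U x + U y) / 2) := by rw [add_comm (U y)]
    rw [hsym] at h1
    linarith
  have hmid : ∀ x y : ℝ, U ((x + y) / 2) = (U x + U y) / 2 := by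
    intro x y
    have h := U_ginv_mid hU hUc x y
    rw [hmidM x y] at h
    exact h
  have hrmid : ∀ x y : ℝ, midpoint ℝ x y = (x + y) / 2 := by
    intro x y
    rw [midpoint_eq_smul_add, smul_eq_mul, invOf_eq_inv (2:ℝ)]
    ring
  set D : ℝ → ℝ := fun x => U x - U 0 with hD
  have hD0 : D 0 = 0 := sub_self _
  have hDmid : ∀ x y : ℝ, D (midpoint ℝ x y) = midpoint ℝ (D x) (D y) := by
    intro x y
    rw [hrmid, hrmid]
    simp only [hD]
    have h := hmid x y
    linarith
  have hDc : Continuous D := hUc.sub continuous_const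
  set φ := (AddMonoidHom.ofMapMidpoint ℝ ℝ D hD0 hDmid).toRealLinearMap hDc with hφ
  have hφx : ∀ y : ℝ, φ y = D y := by
    intro y
    rw [hφ]
    rfl
  have hDval : ∀ x : ℝ, D x = x * D 1 := by
    intro x
    have h := φ.map_smul x (1 : ℝ)
    rw [smul_eq_mul, mul_one] at h
    rw [← hφx x, h, smul_eq_mul, hφx 1]
  refine ⟨U 1 - U 0, U 0, by linarith [hU (show (0:ℝ) < 1 by norm_num)], fun x => ?_⟩
  have h := hDval x
  simp only [hD] at h
  have h2 : x * (U 1 - U 0) = (U 1 - U 0) * x := mul_comm _ _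
  linarith

lemma reverse_linear (α : ℝ) (hα0 : 0 < α) (hα1 : α < 1)
    {U : ℝ → ℝ} (a b : ℝ) (ha : 0 < a) (hab : ∀ x, U x = a * x + b) :
    ∀ (Ω : Type) (_ : MeasurableSpace Ω) (P : Measure Ω), IsProbabilityMeasure P →
      ∀ n : ℕ, 2 ≤ n → ∀ X : Fin n → Ω → ℝ,
        (∀ i, Measurable (X i)) → (∀ i, Integrable (X i) P) →
        (∀ i, Integrable (fun ω => U (X i ω)) P) →
        Integrable (fun ω => U (∑ i, X i ω)) P →
        Continuous (cdfR P (fun ω => ∑ i, X i ω)) →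
        TQLM P (fun ω => ∑ i, X i ω) α U =
          ∑ i, ginv U (condExpOn P (fun ω => U (X i ω))
            (tailEvent P (fun ω => ∑ i, X i ω) α)) := by
  intro Ω inst P hP n hn X hXm hXint hUXint hUSint hcdf
  have hane : a ≠ 0 := ne_of_gt ha
  have hginv : ∀ y : ℝ, ginv U y = (y - b) / a := by
    intro y
    have hset : {x : ℝ | y ≤ U x} = Set.Ici ((y - b) / a) := by
      ext x
      simp only [Set.mem_setOf_eq, Set.mem_Ici, hab x]
      rw [div_le_iff₀ ha]
      have hc : a * x = x * a := mul_comm a x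
      constructor <;> intro h <;> linarith
    rw [ginv, hset, csInf_Ici]
  set S : Ω → ℝ := fun ω => ∑ i, X i ω with hS
  have hSm : Measurable S := by
    rw [hS]; exact Finset.measurable_sum _ (fun i _ => hXm i)
  have hSint : Integrable S P := by
    rw [hS]; exact integrable_finset_sum _ (fun i _ => hXint i)
  set v : ℝ := VaR P S α with hv
  set A : Set Ω := tailEvent P S α with hA
  have hAdef : A = {ω | v ≤ S ω} := rfl
  have hAm : MeasurableSet A := by
    rw [hAdef]; exact measurableSet_le measurable_const hSm
  have hcdf_mono : Monotone (cdfR P S) := by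
    intro x y hxy
    unfold cdfR
    exact ENNReal.toReal_mono (measure_ne_top P _)
      (measure_mono (fun ω hω => le_trans hω hxy))
  have hTne : ∃ x0 : ℝ, α ≤ cdfR P S x0 := by
    have hmono : Monotone (fun n : ℕ => {ω | S ω ≤ (n:ℝ)}) := by
      intro i j hij ω hω
      simp only [Set.mem_setOf_eq] at hω ⊢
      exact le_trans hω (by exact_mod_cast hij)
    have hun : (⋃ n : ℕ, {ω | S ω ≤ (n:ℝ)}) = Set.univ := by
      ext ω
      simp only [Set.mem_iUnion, Set.mem_univ, iff_true, Set.mem_setOf_eq]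
      exact ⟨⌈S ω⌉₊, Nat.le_ceil _⟩
    have ht := tendsto_measure_iUnion_atTop (μ := P) hmono
    rw [hun, measure_univ] at ht
    have ht2 : Filter.Tendsto (fun n : ℕ => (P {ω | S ω ≤ (n:ℝ)}).toReal)
        Filter.atTop (nhds 1) := by
      have h := (ENNReal.tendsto_toReal (by norm_num : (1:ENNReal) ≠ ⊤)).comp ht
      exact h
    obtain ⟨n, hn⟩ := (ht2.eventually (eventually_ge_nhds hα1)).exists
    exact ⟨n, hn⟩
  have hTlow : ∃ x1 : ℝ, cdfR P S x1 < α := by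
    have hanti : Antitone (fun n : ℕ => {ω | S ω ≤ -(n:ℝ)}) := by
      intro i j hij ω hω
      simp only [Set.mem_setOf_eq] at hω ⊢
      refine le_trans hω (neg_le_neg ?_)
      exact_mod_cast hij
    have hint : (⋂ n : ℕ, {ω | S ω ≤ -(n:ℝ)}) = ∅ := by
      ext ω
      simp only [Set.mem_iInter, Set.mem_setOf_eq, Set.mem_empty_iff_false, iff_false, not_forall]
      refine ⟨⌈-S ω⌉₊ + 1, ?_⟩
      rw [not_le]
      push_cast
      linarith [Nat.le_ceil (-S ω)]
    have ht := tendsto_measure_iInter_atTop (μ := P)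
      (fun n => (measurableSet_le hSm measurable_const).nullMeasurableSet) hanti
      ⟨0, measure_ne_top P _⟩
    rw [hint, measure_empty] at ht
    have ht2 : Filter.Tendsto (fun n : ℕ => (P {ω | S ω ≤ -(n:ℝ)}).toReal)
        Filter.atTop (nhds 0) := by
      have h := (ENNReal.tendsto_toReal (by norm_num : (0:ENNReal) ≠ ⊤)).comp ht
      exact h
    obtain ⟨n, hn⟩ := (ht2.eventually (eventually_lt_nhds hα0)).exists
    exact ⟨-(n:ℝ), hn⟩
  obtain ⟨x0, hx0⟩ := hTne
  obtain ⟨x1, hx1⟩ := hTlow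
  have hTbdd : BddBelow {x : ℝ | α ≤ cdfR P S x} := by
    refine ⟨x1, fun x hx => ?_⟩
    by_contra hc
    push_neg at hc
    exact absurd (le_trans hx (hcdf_mono (le_of_lt hc))) (not_le.mpr hx1)
  have hlow : ∀ x, x < v → cdfR P S x < α := by
    intro x hxv
    by_contra hc
    push_neg at hc
    have : v ≤ x := csInf_le hTbdd hc
    linarith
  have hcdfv : cdfR P S v ≤ α := by
    have htend : Filter.Tendsto (cdfR P S) (nhdsWithin v (Set.Iio v)) (nhds (cdfR P S v)) :=
      (hcdf.continuousAt).continuousWithinAt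
    have hev : ∀ᶠ x in nhdsWithin v (Set.Iio v), cdfR P S x ≤ α := by
      filter_upwards [self_mem_nhdsWithin] with x hx
      exact le_of_lt (hlow x hx)
    exact le_of_tendsto htend hev
  have hcompl : Aᶜ = {ω | S ω < v} := by
    rw [hAdef]; ext ω; simp [not_le]
  have hPcompl : P Aᶜ < 1 := by
    rw [hcompl]
    have hsub : {ω | S ω < v} ⊆ {ω | S ω ≤ v} := fun ω hω => le_of_lt (show S ω < v from hω)
    refine lt_of_le_of_lt (measure_mono hsub) (lt_of_le_of_lt ?_
      (ENNReal.ofReal_lt_one.mpr hα1))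
    rw [← ENNReal.ofReal_toReal (measure_ne_top P {ω | S ω ≤ v})]
    exact ENNReal.ofReal_le_ofReal hcdfv
  have hPA_pos : 0 < (P A).toReal := by
    refine ENNReal.toReal_pos ?_ (measure_ne_top P A)
    intro h0
    have h3 : P A + P Aᶜ = 1 := by rw [measure_add_measure_compl hAm, measure_univ]
    rw [h0, zero_add] at h3
    rw [h3] at hPcompl
    exact lt_irrefl _ hPcompl
  set t : ℝ := (P A).toReal with ht
  have htne : t ≠ 0 := ne_of_gt hPA_pos
  have hcondU : ∀ f : Ω → ℝ, Integrable f P →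
      condExpOn P (fun ω => U (f ω)) A = (a * ∫ ω in A, f ω ∂P) / t + b := by
    intro f hf
    unfold condExpOn
    simp only [hab]
    rw [integral_add (hf.integrableOn.const_mul a)
      (integrableOn_const (measure_ne_top P A)),
      integral_const_mul, setIntegral_const, smul_eq_mul, measureReal_def, ← ht]
    field_simp
  have hLHS : TQLM P S α U = (∫ ω in A, S ω ∂P) / t := by
    unfold TQLM
    rw [← hA, hcondU S hSint, hginv]
    field_simp
    ring
  have hRHS : ∀ i : Fin n, ginv U (condExpOn P (fun ω => U (X i ω)) A) =
      (∫ ω in A, X i ω ∂P) / t := by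
    intro i
    rw [hcondU (X i) (hXint i), hginv]
    field_simp
    ring
  have hsumint : (∫ ω in A, S ω ∂P) = ∑ i, ∫ ω in A, X i ω ∂P := by
    rw [hS]
    exact integral_finset_sum _ (fun i _ => (hXint i).integrableOn)
  rw [hLHS]
  simp only [hRHS]
  rw [hsumint, Finset.sum_div]

/-- The capital-allocation additivity
`ρ_U^α(S) = ∑ i, ρ_U^α(X_i | S)`, `S = X_1 + ⋯ + X_n`, holds for every `n ≥ 2`
and every vector of integrable random variables whose sum has a continuous
distribution function (on any probability space, with all conditional
expectations existing) if and only if `U` is linear, `U(x) = a x + b`, `a > 0`. -/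
theorem capital_allocation_additive_iff_linear
    (α : ℝ) (hα : α ∈ Set.Ioo (0:ℝ) 1)
    (U : ℝ → ℝ) (hU : StrictMono U) (hUc : Continuous U) :
    (∀ (Ω : Type) (_ : MeasurableSpace Ω) (P : Measure Ω), IsProbabilityMeasure P →
      ∀ n : ℕ, 2 ≤ n → ∀ X : Fin n → Ω → ℝ,
        (∀ i, Measurable (X i)) → (∀ i, Integrable (X i) P) →
        (∀ i, Integrable (fun ω => U (X i ω)) P) →
        Integrable (fun ω => U (∑ i, X i ω)) P →
        Continuous (cdfR P (fun ω => ∑ i, X i ω)) →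
        TQLM P (fun ω => ∑ i, X i ω) α U =
          ∑ i, ginv U (condExpOn P (fun ω => U (X i ω))
            (tailEvent P (fun ω => ∑ i, X i ω) α)))
    ↔ ∃ a b : ℝ, 0 < a ∧ ∀ x : ℝ, U x = a * x + b := by
  obtain ⟨hα0, hα1⟩ := hα
  constructor
  · intro H
    exact forward_linear α hα0 hα1 hU hUc H
  · rintro ⟨a, b, ha, hab⟩
    exact reverse_linear α hα0 hα1 a b ha hab
end

section
/- Let γ > 0, α ∈ (0,1), and let X_1,…,X_n be pairwise comonotone random variables, say X_i = f_i(V) with f_i increasing and left-continuous and V uniformly distributed on (0,1), such that S = X_1 + ⋯ + X_n has a continuous distribution function and all relevant exponential moments are finite. Then ρ_γ^α(S) ≥ Σ_{i=1}^n ρ_γ^α(X_i | S). -/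
open MeasureTheory Real Set

/-- Chebyshev association inequality: for monotone `g, h` composed with a common
random variable `W`, under a probability measure the product of expectations is
at most the expectation of the product. -/
lemma chebyshev_assoc {Ω : Type*} [MeasurableSpace Ω] (Q : Measure Ω) [IsProbabilityMeasure Q]
    (W : Ω → ℝ) (g h : ℝ → ℝ) (hg : Monotone g) (hh : Monotone h)
    (hgi : Integrable (fun ω => g (W ω)) Q) (hhi : Integrable (fun ω => h (W ω)) Q)
    (hghi : Integrable (fun ω => g (W ω) * h (W ω)) Q) :
    (∫ ω, g (W ω) ∂Q) * (∫ ω, h (W ω) ∂Q) ≤ ∫ ω, g (W ω) * h (W ω) ∂Q := by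
  set c : ℝ := ∫ ω, g (W ω) ∂Q with hc
  -- degenerate cases: `g ∘ W` is a.e. constant
  have hconst : ((fun ω => g (W ω)) =ᵐ[Q] fun _ => c) →
      (∫ ω, g (W ω) ∂Q) * (∫ ω, h (W ω) ∂Q) ≤ ∫ ω, g (W ω) * h (W ω) ∂Q := by
    intro hae
    have : ∫ ω, g (W ω) * h (W ω) ∂Q = ∫ ω, c * h (W ω) ∂Q :=
      integral_congr_ae (hae.mul (Filter.EventuallyEq.refl _ _))
    rw [this, integral_const_mul, ← hc]
  by_cases hU : ∃ u, c < g u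
  · by_cases hL : ∃ l, g l < c
    · obtain ⟨u, hu⟩ := hU
      obtain ⟨l0, hl0⟩ := hL
      set L : Set ℝ := {v | g v < c} with hLdef
      have hlt : ∀ v ∈ L, ∀ w, c < g w → v < w := by
        intro v hv w hw
        by_contra hvw
        exact absurd (hg (not_lt.1 hvw)) (not_le.2 (lt_trans hv hw))
      have hbdd : BddAbove (h '' L) := by
        refine ⟨h u, ?_⟩
        rintro y ⟨v, hv, rfl⟩
        exact hh (hlt v hv u hu).le
      have hne : (h '' L).Nonempty := ⟨h l0, l0, hl0, rfl⟩
      set d : ℝ := sSup (h '' L) with hd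
      have hpoint : ∀ v, 0 ≤ (g v - c) * (h v - d) := by
        intro v
        rcases lt_trichotomy (g v) c with hv | hv | hv
        · have : h v ≤ d := le_csSup hbdd ⟨v, hv, rfl⟩
          nlinarith
        · simp [hv]
        · have : d ≤ h v := by
            refine csSup_le hne ?_
            rintro y ⟨w, hw, rfl⟩
            exact hh (hlt w hw v hv).le
          exact mul_nonneg (by linarith) (by linarith)
      have h0 : 0 ≤ ∫ ω, (g (W ω) - c) * (h (W ω) - d) ∂Q :=
        integral_nonneg fun ω => hpoint (W ω)
      have hexp : (fun ω => (g (W ω) - c) * (h (W ω) - d)) =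
          fun ω => (g (W ω) * h (W ω) - c * h (W ω)) - (d * g (W ω) - d * c) := by
        funext ω; ring
      rw [hexp] at h0
      have hint1 : Integrable (fun ω => g (W ω) * h (W ω) - c * h (W ω)) Q :=
        hghi.sub (hhi.const_mul c)
      have hint2 : Integrable (fun ω => d * g (W ω) - d * c) Q :=
        (hgi.const_mul d).sub (integrable_const _)
      rw [integral_sub hint1 hint2, integral_sub hghi (hhi.const_mul c),
        integral_sub (hgi.const_mul d) (integrable_const _), integral_const_mul,
        integral_const_mul, integral_const, probReal_univ] at h0
      simp only [ENNReal.toReal_one, one_smul, ← hc] at h0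
      linarith
    · push_neg at hL
      refine hconst ?_
      have hle : ∀ ω, c ≤ g (W ω) := fun ω => hL (W ω)
      have : ∫ ω, (g (W ω) - c) ∂Q = 0 := by
        rw [integral_sub hgi (integrable_const _), integral_const, probReal_univ]
        simp [hc]
      have hae := (integral_eq_zero_iff_of_nonneg
        (fun ω => sub_nonneg.2 (hle ω)) (hgi.sub (integrable_const _))).1 this
      filter_upwards [hae] with ω hω
      have : g (W ω) - c = 0 := hω
      linarith
  · push_neg at hU
    refine hconst ?_
    have hle : ∀ ω, g (W ω) ≤ c := fun ω => hU (W ω)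
    have : ∫ ω, (c - g (W ω)) ∂Q = 0 := by
      rw [integral_sub (integrable_const _) hgi, integral_const, probReal_univ]
      simp [hc]
    have hae := (integral_eq_zero_iff_of_nonneg
      (fun ω => sub_nonneg.2 (hle ω)) ((integrable_const _).sub hgi)).1 this
    filter_upwards [hae] with ω hω
    have : c - g (W ω) = 0 := hω
    linarith

/-- Iterated Chebyshev association inequality for finitely many nonnegative
monotone functions of a common random variable. -/
lemma chebyshev_prod {Ω ι : Type*} [MeasurableSpace Ω] (Q : Measure Ω) [IsProbabilityMeasure Q]
    (W : Ω → ℝ) (g : ι → ℝ → ℝ) (hg : ∀ i, Monotone (g i)) (hpos : ∀ i v, 0 ≤ g i v)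
    (s : Finset ι)
    (hint : ∀ t ⊆ s, Integrable (fun ω => ∏ i ∈ t, g i (W ω)) Q) :
    ∏ i ∈ s, (∫ ω, g i (W ω) ∂Q) ≤ ∫ ω, ∏ i ∈ s, g i (W ω) ∂Q := by
  classical
  induction s using Finset.induction with
  | empty => simp
  | @insert a t ha IH =>
      have hta : Integrable (fun ω => g a (W ω)) Q := by
        have := hint {a} (Finset.singleton_subset_iff.2 (Finset.mem_insert_self a t))
        simpa using this
      have htt : ∀ t' ⊆ t, Integrable (fun ω => ∏ i ∈ t', g i (W ω)) Q :=
        fun t' h => hint t' (h.trans (Finset.subset_insert a t))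
      have IH' := IH htt
      have hmono : Monotone (fun v => ∏ i ∈ t, g i v) := by
        intro x y hxy
        exact Finset.prod_le_prod (fun i _ => hpos i x) (fun i _ => hg i hxy)
      have hall : Integrable (fun ω => g a (W ω) * ∏ i ∈ t, g i (W ω)) Q := by
        have := hint (insert a t) le_rfl
        simpa [Finset.prod_insert ha] using this
      have key := chebyshev_assoc Q W (g a) (fun v => ∏ i ∈ t, g i v) (hg a) hmono
        hta (htt t le_rfl) hall
      have h1 : ∏ i ∈ insert a t, (∫ ω, g i (W ω) ∂Q)
          = (∫ ω, g a (W ω) ∂Q) * ∏ i ∈ t, (∫ ω, g i (W ω) ∂Q) :=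
        Finset.prod_insert ha
      have h2 : (∫ ω, ∏ i ∈ insert a t, g i (W ω) ∂Q)
          = ∫ ω, g a (W ω) * ∏ i ∈ t, g i (W ω) ∂Q := by
        congr 1; funext ω; exact Finset.prod_insert ha
      rw [h1, h2]
      calc (∫ ω, g a (W ω) ∂Q) * ∏ i ∈ t, (∫ ω, g i (W ω) ∂Q)
          ≤ (∫ ω, g a (W ω) ∂Q) * (∫ ω, ∏ i ∈ t, g i (W ω) ∂Q) := by
            exact mul_le_mul_of_nonneg_left IH'
              (integral_nonneg fun ω => hpos a (W ω))
        _ ≤ ∫ ω, g a (W ω) * ∏ i ∈ t, g i (W ω) ∂Q := key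

/-- For `γ > 0` and pairwise comonotone `X_i = f_i(V)`,
`ρ_γ^α(S) ≥ ∑ i, ρ_γ^α(X_i | S)` where `S = X_1 + ⋯ + X_n`. -/
theorem TCERM_superadditive_comonotone
    {Ω : Type*} [MeasurableSpace Ω] (P : Measure Ω) [IsProbabilityMeasure P]
    (γ : ℝ) (hγ : 0 < γ) (α : ℝ) (hα : α ∈ Set.Ioo (0:ℝ) 1)
    (n : ℕ) (V : Ω → ℝ) (hV : Measurable V)
    (hunif : P.map V = volume.restrict (Set.Ioo (0:ℝ) 1))
    (f : Fin n → ℝ → ℝ) (hf : ∀ i, Monotone (f i))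
    (hflc : ∀ i, ∀ x : ℝ, ContinuousWithinAt (f i) (Set.Iio x) x)
    (X : Fin n → Ω → ℝ) (hXdef : ∀ i, X i = fun ω => f i (V ω))
    (S : Ω → ℝ) (hS : S = fun ω => ∑ i, X i ω)
    (hFS : Continuous (cdfR P S))
    (hintS : Integrable (fun ω => Real.exp (γ * S ω)) P)
    (hintX : ∀ i, Integrable (fun ω => Real.exp (γ * X i ω)) P) :
    ∑ i, (1 / γ) * Real.log
        (condExpOn P (fun ω => Real.exp (γ * X i ω)) (tailEvent P S α))
      ≤ TCERM P S α γ := by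
  classical
  obtain ⟨hα0, hα1⟩ := hα
  have hfm : ∀ i, Measurable (f i) := fun i => (hf i).measurable
  have hXm : ∀ i, Measurable (X i) := fun i => by rw [hXdef i]; exact (hfm i).comp hV
  have hSm : Measurable S := by rw [hS]; exact Finset.measurable_sum _ fun i _ => hXm i
  simp only [TCERM]
  set t := VaR P S α with ht
  set A := tailEvent P S α with hAdef
  have hAset : A = {ω | t ≤ S ω} := rfl
  have hAm : MeasurableSet A := measurableSet_le measurable_const hSm
  -- cdf facts
  set μ := P.map S with hμdef
  haveI hμprob : IsProbabilityMeasure μ := Measure.isProbabilityMeasure_map hSm.aemeasurable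
  have hcdf : ∀ x, cdfR P S x = ProbabilityTheory.cdf μ x := by
    intro x
    rw [cdfR, ProbabilityTheory.cdf_eq_real, measureReal_def, hμdef, Measure.map_apply hSm measurableSet_Iic]
    rfl
  set T : Set ℝ := {x | α ≤ cdfR P S x} with hT
  have hTne : T.Nonempty := by
    have := (ProbabilityTheory.tendsto_cdf_atTop μ).eventually (eventually_ge_nhds hα1)
    obtain ⟨x, hx⟩ := this.exists
    exact ⟨x, by rw [hT]; simp only [Set.mem_setOf_eq, hcdf x]; exact hx⟩
  have hTbdd : BddBelow T := by
    have := (ProbabilityTheory.tendsto_cdf_atBot μ).eventually (eventually_lt_nhds hα0)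
    obtain ⟨x0, hx0⟩ := this.exists
    refine ⟨x0, fun x hx => ?_⟩
    by_contra hc
    push_neg at hc
    have hmono : cdfR P S x ≤ cdfR P S x0 := by
      rw [hcdf, hcdf]; exact ProbabilityTheory.monotone_cdf μ hc.le
    have h1 : α ≤ cdfR P S x0 := le_trans hx hmono
    rw [hcdf] at h1
    linarith
  have htvar : t = sInf T := rfl
  have hub : ∀ x < t, cdfR P S x < α := fun x hx =>
    lt_of_not_ge fun hmem => absurd (csInf_le hTbdd hmem) (not_le.2 hx)
  have hcdft : cdfR P S t ≤ α := by
    have htend : Filter.Tendsto (cdfR P S) (nhdsWithin t (Set.Iio t)) (nhds (cdfR P S t)) :=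
      (hFS.tendsto t).mono_left nhdsWithin_le_nhds
    refine le_of_tendsto htend ?_
    filter_upwards [self_mem_nhdsWithin] with x hx
    exact (hub x hx).le
  -- positivity of the tail event
  have hlt_meas : P {ω | S ω < t} ≤ ENNReal.ofReal α := by
    calc P {ω | S ω < t} ≤ P {ω | S ω ≤ t} := measure_mono fun ω (h : S ω < t) => le_of_lt h
      _ = ENNReal.ofReal (cdfR P S t) := by
          rw [cdfR, ENNReal.ofReal_toReal (measure_ne_top _ _)]
      _ ≤ ENNReal.ofReal α := ENNReal.ofReal_le_ofReal hcdft
  have hcompl : A = {ω | S ω < t}ᶜ := by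
    ext ω
    simp only [hAset, Set.mem_setOf_eq, Set.mem_compl_iff, not_lt]
  have hPA : P A ≠ 0 := by
    rw [hcompl, measure_compl (measurableSet_lt hSm measurable_const) (measure_ne_top _ _),
      measure_univ]
    intro h
    rw [tsub_eq_zero_iff_le] at h
    have h2 : (1 : ENNReal) ≤ ENNReal.ofReal α := le_trans h hlt_meas
    exact absurd (ENNReal.ofReal_lt_one.2 hα1) (not_lt.2 h2)
  -- conditional measure
  set Q := ProbabilityTheory.cond P A with hQdef
  haveI hQprob : IsProbabilityMeasure Q := ProbabilityTheory.cond_isProbabilityMeasure hPA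
  have hQint : ∀ φ : Ω → ℝ, Integrable φ P → Integrable φ Q := by
    intro φ hφ
    rw [hQdef, ProbabilityTheory.cond]
    exact (hφ.restrict).smul_measure (ENNReal.inv_ne_top.2 hPA)
  have hQeq : ∀ φ : Ω → ℝ, condExpOn P φ A = ∫ ω, φ ω ∂Q := by
    intro φ
    rw [hQdef, ProbabilityTheory.cond, integral_smul_measure, ENNReal.toReal_inv, smul_eq_mul,
      condExpOn, div_eq_inv_mul]
  -- the monotone factor functions
  set g : Fin n → ℝ → ℝ := fun i v => Real.exp (γ * f i v) with hgdef
  have hgmono : ∀ i, Monotone (g i) := fun i a b hab =>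
    Real.exp_le_exp.2 (mul_le_mul_of_nonneg_left (hf i hab) hγ.le)
  have hgpos : ∀ i v, 0 ≤ g i v := fun i v => (Real.exp_pos _).le
  -- partial products are integrable wrt P
  have hprodint : ∀ s : Finset (Fin n), Integrable (fun ω => ∏ i ∈ s, g i (V ω)) P := by
    intro s
    set C1 : ℝ := ∏ i ∈ s, Real.exp (γ * f i 0) with hC1
    set D : ℝ := ∏ i ∈ sᶜ, Real.exp (γ * f i 0) with hD
    have hDpos : 0 < D := Finset.prod_pos fun i _ => Real.exp_pos _
    have hC1pos : 0 < C1 := Finset.prod_pos fun i _ => Real.exp_pos _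
    have hmaj : ∀ ω, ∏ i ∈ s, g i (V ω) ≤ C1 + D⁻¹ * Real.exp (γ * S ω) := by
      intro ω
      have hSω : Real.exp (γ * S ω) = ∏ i, g i (V ω) := by
        rw [hS]
        simp only
        rw [Finset.mul_sum, Real.exp_sum]
        exact Finset.prod_congr rfl fun i _ => by rw [hXdef i]
      rcases le_total (V ω) 0 with hv | hv
      · have h1 : ∏ i ∈ s, g i (V ω) ≤ C1 :=
          Finset.prod_le_prod (fun i _ => hgpos i _) (fun i _ => hgmono i hv)
        have h2 : 0 ≤ D⁻¹ * Real.exp (γ * S ω) := by positivity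
        linarith
      · have hsplit : (∏ i ∈ s, g i (V ω)) * ∏ i ∈ sᶜ, g i (V ω) = ∏ i, g i (V ω) :=
          Finset.prod_mul_prod_compl s _
        have hD2 : D ≤ ∏ i ∈ sᶜ, g i (V ω) :=
          Finset.prod_le_prod (fun i _ => (Real.exp_pos _).le) (fun i _ => hgmono i hv)
        have hple : (∏ i ∈ s, g i (V ω)) * D ≤ Real.exp (γ * S ω) := by
          rw [hSω, ← hsplit]
          exact mul_le_mul_of_nonneg_left hD2 (Finset.prod_nonneg fun i _ => hgpos i _)
        have h2 : ∏ i ∈ s, g i (V ω) ≤ D⁻¹ * Real.exp (γ * S ω) := by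
          rw [inv_mul_eq_div, le_div_iff₀ hDpos]
          exact hple
        linarith
    refine Integrable.mono' ((integrable_const C1).add (hintS.const_mul D⁻¹)) ?_ ?_
    · exact (Finset.measurable_prod s fun i _ =>
        Real.measurable_exp.comp (measurable_const.mul ((hfm i).comp hV))).aestronglyMeasurable
    · filter_upwards with ω
      rw [Real.norm_eq_abs, abs_of_nonneg (Finset.prod_nonneg fun i _ => hgpos i _)]
      exact hmaj ω
  -- Chebyshev association inequality
  have hQprodint : ∀ s ⊆ (Finset.univ : Finset (Fin n)),
      Integrable (fun ω => ∏ i ∈ s, g i (V ω)) Q := fun s _ => hQint _ (hprodint s)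
  have main := chebyshev_prod Q V g hgmono hgpos Finset.univ hQprodint
  have hlhs : ∀ i, condExpOn P (fun ω => Real.exp (γ * X i ω)) A = ∫ ω, g i (V ω) ∂Q := by
    intro i
    rw [hQeq]
    congr 1
    funext ω
    rw [hXdef i]
  have hSg : (fun ω => Real.exp (γ * S ω)) = fun ω => ∏ i, g i (V ω) := by
    funext ω
    rw [hS]
    simp only
    rw [Finset.mul_sum, Real.exp_sum]
    exact Finset.prod_congr rfl fun i _ => by rw [hXdef i]
  have hrhs : condExpOn P (fun ω => Real.exp (γ * S ω)) A = ∫ ω, ∏ i, g i (V ω) ∂Q := by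
    rw [hQeq, hSg]
  have hEpos : ∀ i, 0 < condExpOn P (fun ω => Real.exp (γ * X i ω)) A := by
    intro i
    rw [hlhs i, hgdef]
    exact integral_exp_pos (hQint _ (by simpa only [hXdef i] using hintX i))
  have hprod_le : ∏ i, condExpOn P (fun ω => Real.exp (γ * X i ω)) A
      ≤ condExpOn P (fun ω => Real.exp (γ * S ω)) A := by
    rw [hrhs]
    calc ∏ i, condExpOn P (fun ω => Real.exp (γ * X i ω)) A
        = ∏ i, ∫ ω, g i (V ω) ∂Q := Finset.prod_congr rfl fun i _ => hlhs i
      _ ≤ ∫ ω, ∏ i, g i (V ω) ∂Q := main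
  have hppos : 0 < ∏ i, condExpOn P (fun ω => Real.exp (γ * X i ω)) A :=
    Finset.prod_pos fun i _ => hEpos i
  rw [← Finset.mul_sum]
  refine mul_le_mul_of_nonneg_left ?_ (by positivity)
  rw [← Real.log_prod fun i _ => (hEpos i).ne']
  exact Real.log_le_log hppos hprod_le
end

section
/- Let γ > 0, α ∈ (0,1), and let X, Y be countermonotone random variables, say X = f(Z) and Y = g(Z) with f increasing and g decreasing, such that S = X + Y has a continuous distribution function and all relevant exponential moments are finite. Then ρ_γ^α(S) ≤ ρ_γ^α(X | S) + ρ_γ^α(Y | S). -/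
open MeasureTheory Real Set

lemma chebyshev_anti {Ω : Type*} [MeasurableSpace Ω] (μ : Measure Ω) [IsFiniteMeasure μ]
    (u v : Ω → ℝ) (hu : Integrable u μ) (hv : Integrable v μ)
    (huv : Integrable (fun ω => u ω * v ω) μ)
    (h : ∀ ω ω', (u ω - u ω') * (v ω - v ω') ≤ 0) :
    (μ Set.univ).toReal * ∫ ω, u ω * v ω ∂μ ≤ (∫ ω, u ω ∂μ) * ∫ ω, v ω ∂μ := by
  have c1 : Integrable (fun _ : Ω => (1:ℝ)) μ := integrable_const 1
  have hA : Integrable (fun p : Ω × Ω => (u p.1 * v p.1) * 1) (μ.prod μ) := huv.mul_prod c1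
  have hB : Integrable (fun p : Ω × Ω => 1 * (u p.2 * v p.2)) (μ.prod μ) := c1.mul_prod huv
  have hC : Integrable (fun p : Ω × Ω => u p.1 * v p.2) (μ.prod μ) := hu.mul_prod hv
  have hD : Integrable (fun p : Ω × Ω => v p.1 * u p.2) (μ.prod μ) := hv.mul_prod hu
  have key : ∫ p : Ω × Ω, (u p.1 - u p.2) * (v p.1 - v p.2) ∂(μ.prod μ) ≤ 0 :=
    integral_nonpos fun p => h p.1 p.2
  have expand : (fun p : Ω × Ω => (u p.1 - u p.2) * (v p.1 - v p.2)) =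
      fun p : Ω × Ω => ((u p.1 * v p.1) * 1 + 1 * (u p.2 * v p.2)) -
        (u p.1 * v p.2 + v p.1 * u p.2) := by
    funext p; ring
  rw [expand] at key
  have esub := integral_sub (hA.add hB) (hC.add hD)
  simp only [Pi.add_apply] at esub
  have eA : ∫ (a : Ω × Ω), u a.1 * v a.1 * 1 ∂μ.prod μ
      = (∫ ω, u ω * v ω ∂μ) * ∫ _ : Ω, (1:ℝ) ∂μ :=
    integral_prod_mul (fun ω => u ω * v ω) (fun _ => (1:ℝ))
  have eB : ∫ (a : Ω × Ω), 1 * (u a.2 * v a.2) ∂μ.prod μ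
      = (∫ _ : Ω, (1:ℝ) ∂μ) * ∫ ω, u ω * v ω ∂μ :=
    integral_prod_mul (fun _ => (1:ℝ)) (fun ω => u ω * v ω)
  rw [esub, integral_add hA hB, integral_add hC hD, eA, eB, integral_prod_mul,
    integral_prod_mul] at key
  have h1 : ∫ _ : Ω, (1:ℝ) ∂μ = (μ Set.univ).toReal := by simp; rfl
  rw [h1] at key
  nlinarith [key]


/-- For `γ > 0` and countermonotone `X = f(Z)`, `Y = g(Z)`
(`f` increasing, `g` decreasing), `ρ_γ^α(S) ≤ ρ_γ^α(X | S) + ρ_γ^α(Y | S)`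
where `S = X + Y`. -/
theorem TCERM_subadditive_countermonotone
    {Ω : Type*} [MeasurableSpace Ω] (P : Measure Ω) [IsProbabilityMeasure P]
    (γ : ℝ) (hγ : 0 < γ) (α : ℝ) (hα : α ∈ Set.Ioo (0:ℝ) 1)
    (Z : Ω → ℝ) (hZ : Measurable Z)
    (f g : ℝ → ℝ) (hf : Monotone f) (hg : Antitone g)
    (X Y : Ω → ℝ) (hXdef : X = fun ω => f (Z ω)) (hYdef : Y = fun ω => g (Z ω))
    (S : Ω → ℝ) (hS : S = fun ω => X ω + Y ω)
    (hFS : Continuous (cdfR P S))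
    (hintS : Integrable (fun ω => Real.exp (γ * S ω)) P)
    (hintX : Integrable (fun ω => Real.exp (γ * X ω)) P)
    (hintY : Integrable (fun ω => Real.exp (γ * Y ω)) P) :
    TCERM P S α γ ≤
      (1 / γ) * Real.log (condExpOn P (fun ω => Real.exp (γ * X ω)) (tailEvent P S α)) +
      (1 / γ) * Real.log (condExpOn P (fun ω => Real.exp (γ * Y ω)) (tailEvent P S α)) := by
  set A := tailEvent P S α with hA
  set u : Ω → ℝ := fun ω => Real.exp (γ * X ω) with hu
  set v : Ω → ℝ := fun ω => Real.exp (γ * Y ω) with hv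
  have huv_eq : (fun ω => Real.exp (γ * S ω)) = fun ω => u ω * v ω := by
    funext ω; rw [hS]; simp only [hu, hv, ← Real.exp_add]; ring_nf
  by_cases hPA : P A = 0
  · simp [TCERM, condExpOn, hPA, show P (tailEvent P S α) = 0 from hPA]
  -- main case
  have hPA' : 0 < (P A).toReal := ENNReal.toReal_pos hPA (measure_ne_top P A)
  have hintUV : Integrable (fun ω => u ω * v ω) P := huv_eq ▸ hintS
  have hpt : ∀ ω ω', (u ω - u ω') * (v ω - v ω') ≤ 0 := by
    intro ω ω'
    rcases le_total (Z ω) (Z ω') with h' | h'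
    · refine mul_nonpos_of_nonpos_of_nonneg (sub_nonpos.mpr ?_) (sub_nonneg.mpr ?_)
      · exact Real.exp_le_exp.mpr (by rw [hXdef]; exact mul_le_mul_of_nonneg_left (hf h') hγ.le)
      · exact Real.exp_le_exp.mpr (by rw [hYdef]; exact mul_le_mul_of_nonneg_left (hg h') hγ.le)
    · refine mul_nonpos_of_nonneg_of_nonpos (sub_nonneg.mpr ?_) (sub_nonpos.mpr ?_)
      · exact Real.exp_le_exp.mpr (by rw [hXdef]; exact mul_le_mul_of_nonneg_left (hf h') hγ.le)
      · exact Real.exp_le_exp.mpr (by rw [hYdef]; exact mul_le_mul_of_nonneg_left (hg h') hγ.le)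
  have cheb := chebyshev_anti (P.restrict A) u v (hintX.restrict) (hintY.restrict)
    (hintUV.restrict) hpt
  rw [Measure.restrict_apply_univ] at cheb
  -- positivity of the set integrals
  have hposint : ∀ w : Ω → ℝ, (∀ ω, 0 < w ω) → Integrable w P → 0 < ∫ ω in A, w ω ∂P := by
    intro w hw hwint
    rw [setIntegral_pos_iff_support_of_nonneg_ae
      (Filter.Eventually.of_forall fun ω => (hw ω).le) hwint.restrict]
    have : Function.support w = Set.univ := by
      ext ω; simp [Function.mem_support, (hw ω).ne']
    rw [this, Set.univ_inter]
    exact pos_iff_ne_zero.mpr hPA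
  have hIX : 0 < ∫ ω in A, u ω ∂P := hposint u (fun ω => Real.exp_pos _) hintX
  have hIY : 0 < ∫ ω in A, v ω ∂P := hposint v (fun ω => Real.exp_pos _) hintY
  have hIUV : 0 < ∫ ω in A, u ω * v ω ∂P :=
    hposint _ (fun ω => mul_pos (Real.exp_pos _) (Real.exp_pos _)) hintUV
  have hIS : (∫ ω in A, Real.exp (γ * S ω) ∂P) = ∫ ω in A, u ω * v ω ∂P := by
    rw [huv_eq]
  -- conditional expectations
  have hcS : condExpOn P (fun ω => Real.exp (γ * S ω)) A
      = (∫ ω in A, u ω * v ω ∂P) / (P A).toReal := by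
    rw [condExpOn, hIS]
  have hcX : condExpOn P u A = (∫ ω in A, u ω ∂P) / (P A).toReal := rfl
  have hcY : condExpOn P v A = (∫ ω in A, v ω ∂P) / (P A).toReal := rfl
  have hcXpos : 0 < condExpOn P u A := by rw [hcX]; exact div_pos hIX hPA'
  have hcYpos : 0 < condExpOn P v A := by rw [hcY]; exact div_pos hIY hPA'
  have hcSpos : 0 < condExpOn P (fun ω => Real.exp (γ * S ω)) A := by
    rw [hcS]; exact div_pos hIUV hPA'
  have hmain : condExpOn P (fun ω => Real.exp (γ * S ω)) A
      ≤ condExpOn P u A * condExpOn P v A := by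
    rw [hcS, hcX, hcY, div_mul_div_comm, div_le_div_iff₀ hPA' (by positivity)]
    nlinarith [cheb, hPA']
  have hlog : Real.log (condExpOn P (fun ω => Real.exp (γ * S ω)) A)
      ≤ Real.log (condExpOn P u A) + Real.log (condExpOn P v A) := by
    rw [← Real.log_mul hcXpos.ne' hcYpos.ne']
    exact Real.log_le_log hcSpos hmain
  have h1γ : (0:ℝ) ≤ 1 / γ := by positivity
  calc TCERM P S α γ
      = (1 / γ) * Real.log (condExpOn P (fun ω => Real.exp (γ * S ω)) A) := rfl
    _ ≤ (1 / γ) * (Real.log (condExpOn P u A) + Real.log (condExpOn P v A)) :=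
        mul_le_mul_of_nonneg_left hlog h1γ
    _ = (1 / γ) * Real.log (condExpOn P u A) + (1 / γ) * Real.log (condExpOn P v A) := by ring
end
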